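/- arXiv:1202.2878 — 5 statements merged into one kernel-verified Lean document; each statement's English description precedes it below -/
import Mathlib

section
/- Let e_n be a sequence of càdlàg functions from [0,∞) to a Polish space V that are excursions (i.e., e_n(t) = a for all finite t ≥ T(e_n), where T(f) = inf{t > 0 : f(t) = a}), and let e be a càdlàg function. If e_n → e in the Skorokhod J1 topology, then T(e) ≤ liminf_n T(e_n). -/
open scoped NNReal ENNReal Topology
open Filter Set

noncomputable section

/-- A càdlàg function `[0,∞) → V`: right-continuous with left limits
(at every positive time). -/
def Cadlag {V : Type*} [PseudoMetricSpace V] (f : ℝ≥0 → V) : Prop :=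
  (∀ t : ℝ≥0, ContinuousWithinAt f (Set.Ici t) t) ∧
  ∀ t : ℝ≥0, 0 < t → ∃ l : V, Filter.Tendsto f (nhdsWithin t (Set.Iio t)) (nhds l)

/-- A time change: an increasing bijection of `[0,∞)`. -/
def IsTimeChange (l : ℝ≥0 → ℝ≥0) : Prop := StrictMono l ∧ Function.Bijective l

/-- Convergence in the Skorokhod J1 topology, along a filter `F`: there are
time changes `l i` with `‖l i − Id‖_∞ → 0` and uniform convergence of
`f i ∘ l i` to `g` on `[0,m]` for every `m` in some unbounded set. -/
def J1Tendsto {V : Type*} [PseudoMetricSpace V] {ι : Type*} (F : Filter ι)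
    (f : ι → ℝ≥0 → V) (g : ℝ≥0 → V) : Prop :=
  ∃ l : ι → ℝ≥0 → ℝ≥0, (∀ i, IsTimeChange (l i)) ∧
    Filter.Tendsto (fun i => ⨆ s : ℝ≥0, edist (l i s) s) F (nhds 0) ∧
    ∃ M : Set ℝ≥0, (∀ r : ℝ≥0, ∃ m ∈ M, r ≤ m) ∧
      ∀ m ∈ M, Filter.Tendsto
        (fun i => ⨆ s : Set.Icc (0:ℝ≥0) m, edist (f i (l i (s:ℝ≥0))) (g (s:ℝ≥0)))
        F (nhds 0)

/-- First hitting time of `a` : `T(f) = inf{t > 0 : f t = a} ∈ [0,∞]`. -/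
def hitTime {V : Type*} [PseudoMetricSpace V] (a : V) (f : ℝ≥0 → V) : ℝ≥0∞ :=
  sInf ((fun t : ℝ≥0 => (t : ℝ≥0∞)) '' {t : ℝ≥0 | 0 < t ∧ f t = a})

/-- An excursion: a càdlàg path which sticks at `a` from its first hitting
time of `a` on. -/
def IsExcursion {V : Type*} [PseudoMetricSpace V] (a : V) (f : ℝ≥0 → V) : Prop :=
  Cadlag f ∧ ∀ t : ℝ≥0, hitTime a f ≤ (t : ℝ≥0∞) → f t = a

end

/-- if excursions `e n` converge in J1 to a càdlàg `g`, then
`T(g) ≤ liminf_n T(e n)`. -/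
theorem statement0 {V : Type*} [MetricSpace V] [PolishSpace V] (a : V)
    (e : ℕ → ℝ≥0 → V) (g : ℝ≥0 → V)
    (he : ∀ n, IsExcursion a (e n)) (hg : Cadlag g)
    (hconv : J1Tendsto Filter.atTop e g) :
    hitTime a g ≤ Filter.liminf (fun n => hitTime a (e n)) Filter.atTop := by
  obtain ⟨l, hl, hl0, M, hM, hMconv⟩ := hconv
  have key : ∀ c' : ℝ≥0,
      Filter.liminf (fun n => hitTime a (e n)) Filter.atTop < (c' : ℝ≥0∞) →
      hitTime a g ≤ (c' : ℝ≥0∞) := by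
    intro c' hc'
    have hfreq : ∃ᶠ n in Filter.atTop, hitTime a (e n) < (c' : ℝ≥0∞) :=
      Filter.frequently_lt_of_liminf_lt (by isBoundedDefault) hc'
    have hga : ∀ s : ℝ≥0, c' < s → g s = a := by
      intro s hs
      obtain ⟨m, hmM, hsm⟩ := hM s
      have hεpos : (0:ℝ≥0∞) < ENNReal.ofReal ((s:ℝ) - c') := by
        rw [ENNReal.ofReal_pos]
        exact sub_pos.mpr (by exact_mod_cast hs)
      have hev1 : ∀ᶠ n in Filter.atTop,
          edist (l n s) s < ENNReal.ofReal ((s:ℝ) - c') := by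
        filter_upwards [hl0.eventually (gt_mem_nhds hεpos)] with n hn
        exact lt_of_le_of_lt (le_iSup (fun t => edist (l n t) t) s) hn
      have hgt : ∀ᶠ n in Filter.atTop, c' < l n s := by
        filter_upwards [hev1] with n hn
        by_contra h
        push_neg at h
        have hd : dist (l n s) s < (s:ℝ) - c' := by
          rw [edist_dist] at hn
          exact (ENNReal.ofReal_lt_ofReal_iff_of_nonneg dist_nonneg).mp hn
        have hd2 : (s:ℝ) - c' ≤ dist (l n s) s := by
          rw [NNReal.dist_eq]
          calc (s:ℝ) - c' ≤ (s:ℝ) - l n s := by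
                have : ((l n s : ℝ)) ≤ c' := by exact_mod_cast h
                linarith
            _ ≤ |(l n s : ℝ) - s| := by
                rw [abs_sub_comm]; exact le_abs_self _
        linarith
      have hzero : edist a (g s) = 0 := by
        by_contra h
        have hpos : 0 < edist a (g s) := pos_iff_ne_zero.mpr h
        have hev2 : ∀ᶠ n in Filter.atTop,
            edist (e n (l n s)) (g s) < edist a (g s) := by
          filter_upwards [(hMconv m hmM).eventually (gt_mem_nhds hpos)] with n hn
          refine lt_of_le_of_lt ?_ hn
          exact le_iSup (fun t : Set.Icc (0:ℝ≥0) m =>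
            edist (e n (l n (t:ℝ≥0))) (g (t:ℝ≥0))) ⟨s, ⟨zero_le, hsm⟩⟩
        obtain ⟨n, hlt, hgtn, hev⟩ := (hfreq.and_eventually (hgt.and hev2)).exists
        have hea : e n (l n s) = a :=
          (he n).2 _ (le_trans hlt.le (by exact_mod_cast hgtn.le))
        rw [hea] at hev
        exact lt_irrefl _ hev
      exact (eq_of_edist_eq_zero hzero).symm
    refine ENNReal.le_of_forall_pos_le_add ?_
    intro ε hε _
    have h1 : hitTime a g ≤ ((c' + ε : ℝ≥0) : ℝ≥0∞) := by
      apply sInf_le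
      exact ⟨c' + ε, ⟨lt_of_lt_of_le hε le_add_self,
        hga _ (lt_add_of_pos_right _ hε)⟩, rfl⟩
    simpa using h1
  by_contra h
  push_neg at h
  obtain ⟨c, hc1, hc2⟩ := exists_between h
  have hct : c ≠ ⊤ := (hc2.trans_le le_top).ne
  lift c to ℝ≥0 using hct
  exact (key c hc1).not_gt hc2
end

section
/- Define the concatenation map C : D × [0,∞) × D → D by C(f,t,h)(s) = f(s) if s < t and h(s−t) if s ≥ t. If f_n → f and h_n → h in the J1 topology, t_n → t with t > 0, and the jump sizes Δf_n(t_n) → Δf(t) (where Δf(t) = v(f(t), f(t−))), then C(f_n, t_n, h_n) → C(f, t, h) in the J1 topology. -/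
open scoped NNReal ENNReal Topology
open Filter Set

noncomputable section

/-- Concatenation `C(f,t,h)(s) = f s` for `s < t`, `h (s−t)` for `s ≥ t`. -/
def concatMap {V : Type*} (f : ℝ≥0 → V) (t : ℝ≥0) (h : ℝ≥0 → V) : ℝ≥0 → V :=
  fun s => if s < t then f s else h (s - t)

/-- Jump size `Δf(t) = v(f t, f(t−))` (with `f(0−) = f 0`). -/
def jumpSize {V : Type*} [PseudoMetricSpace V] (f : ℝ≥0 → V) (t : ℝ≥0) : ℝ :=
  dist (f t) (Function.leftLim f t)

end

namespace Stmt1Aux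


/-- the rescaling near `t0`: identity up to `a`, then affine with slope `k`. -/
noncomputable def phi (a k : ℝ≥0) (s : ℝ≥0) : ℝ≥0 := if s ≤ a then s else a + (s - a) * k

lemma phi_strictMono {a k : ℝ≥0} (hk : 0 < k) : StrictMono (phi a k) := by
  intro s1 s2 h
  unfold phi
  rcases le_or_gt s1 a with h1 | h1
  · rcases le_or_gt s2 a with h2 | h2
    · simpa [h1, h2] using h
    · rw [if_pos h1, if_neg (not_le.mpr h2)]
      calc s1 ≤ a := h1
        _ < a + (s2 - a) * k := lt_add_of_pos_right _ (mul_pos (tsub_pos_of_lt h2) hk)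
  · rw [if_neg (not_le.mpr h1), if_neg (not_le.mpr (h1.trans h))]
    exact add_lt_add_right (mul_lt_mul_of_pos_right (tsub_lt_tsub_right_of_le h1.le h) hk) _

lemma phi_of_le {a k s : ℝ≥0} (h : s ≤ a) : phi a k s = s := if_pos h

lemma phi_apply_t0 {a k t0 : ℝ≥0} (ha : a < t0) : phi a k t0 = a + (t0 - a) * k :=
  if_neg (not_le.mpr ha)

lemma phi_lt {a k t0 s : ℝ≥0} (hk : 0 < k) (ha : a < t0) (hs : s < t0) :
    phi a k s < a + (t0 - a) * k := by
  rw [← phi_apply_t0 (k := k) ha]; exact phi_strictMono hk hs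

lemma phi_ge {a k s : ℝ≥0} (h : a < s) : a ≤ phi a k s := by
  rw [phi, if_neg (not_le.mpr h)]; exact le_self_add

lemma phi_surjOn {a k t0 : ℝ≥0} (hk : 0 < k) (ha : a < t0) :
    ∀ u, u < a + (t0 - a) * k → ∃ s, s < t0 ∧ phi a k s = u := by
  intro u hu
  rcases le_or_gt u a with h | h
  · exact ⟨u, lt_of_le_of_lt h ha, phi_of_le h⟩
  · refine ⟨a + (u - a) / k, ?_, ?_⟩
    · have h1 : u - a < (t0 - a) * k := (tsub_lt_iff_left h.le).mpr hu
      have h2 : (u - a) / k < t0 - a := by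
        have := (div_lt_div_iff_of_pos_right hk).mpr h1
        rwa [mul_div_cancel_right₀ _ hk.ne'] at this
      calc a + (u - a) / k < a + (t0 - a) := add_lt_add_right h2 _
        _ = t0 := add_tsub_cancel_of_le ha.le
    · have hpos : 0 < (u - a) / k := by
        rw [pos_iff_ne_zero]
        simp only [ne_eq, div_eq_zero_iff, tsub_eq_zero_iff_le, not_or, not_le]
        exact ⟨h, hk.ne'⟩
      rw [phi, if_neg (not_le.mpr (lt_add_of_pos_right a hpos)), add_tsub_cancel_left,
        div_mul_cancel₀ _ hk.ne', add_tsub_cancel_of_le h.le]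

/-- the concatenated time change. -/
noncomputable def tc (l m : ℝ≥0 → ℝ≥0) (t0 tn a k : ℝ≥0) : ℝ≥0 → ℝ≥0 :=
  fun s => if s < t0 then l (phi a k s) else tn + m (s - t0)

lemma timeChange_zero {l : ℝ≥0 → ℝ≥0} (hl : IsTimeChange l) : l 0 = 0 := by
  obtain ⟨u, hu⟩ := hl.2.2 0
  rcases eq_or_lt_of_le ((zero_le : 0 ≤ u)) with h | h
  · rw [← h] at hu; exact hu
  · exact absurd (hu ▸ hl.1 h) (by simp)

lemma tc_isTimeChange {l m : ℝ≥0 → ℝ≥0} (hl : IsTimeChange l) (hm : IsTimeChange m)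
    {t0 tn a k : ℝ≥0} (hk : 0 < k) (ha : a < t0)
    (hc : l (a + (t0 - a) * k) = tn) : IsTimeChange (tc l m t0 tn a k) := by
  have hmono : StrictMono (tc l m t0 tn a k) := by
    intro s1 s2 h
    unfold tc
    by_cases h1 : s1 < t0 <;> by_cases h2 : s2 < t0
    · rw [if_pos h1, if_pos h2]
      exact hl.1 (phi_strictMono hk h)
    · rw [if_pos h1, if_neg h2]
      calc l (phi a k s1) < l (a + (t0 - a) * k) := hl.1 (phi_lt hk ha h1)
        _ = tn := hc
        _ ≤ tn + m (s2 - t0) := le_self_add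
    · exact absurd h2 (not_lt.mpr ((not_lt.mp h1).trans h.le))
    · rw [if_neg h1, if_neg h2]
      exact add_lt_add_right (hm.1 (tsub_lt_tsub_right_of_le (not_lt.mp h1) h)) _
  refine ⟨hmono, hmono.injective, ?_⟩
  intro y
  rcases lt_or_ge y tn with hy | hy
  · obtain ⟨u, hu⟩ := hl.2.2 y
    have hu_lt : u < a + (t0 - a) * k := by
      rw [← hl.1.lt_iff_lt, hu, hc]; exact hy
    obtain ⟨s, hs, hphi⟩ := phi_surjOn hk ha u hu_lt
    exact ⟨s, by rw [tc, if_pos hs, hphi, hu]⟩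
  · obtain ⟨u, hu⟩ := hm.2.2 (y - tn)
    refine ⟨t0 + u, ?_⟩
    rw [tc, if_neg (not_lt.mpr le_self_add), add_tsub_cancel_left, hu,
      add_tsub_cancel_of_le hy]



lemma nnreal_dist_add_add (a b c d : ℝ≥0) : edist (a+b) (c+d) ≤ edist a c + edist b d := by
  rw [edist_nndist, edist_nndist, edist_nndist, ← ENNReal.coe_add, ENNReal.coe_le_coe,
    ← NNReal.coe_le_coe]
  push_cast [coe_nndist]
  rw [NNReal.dist_eq, NNReal.dist_eq, NNReal.dist_eq]
  push_cast
  calc |(↑a+↑b)-(↑c+↑d)| = |((a:ℝ)-↑c)+((b:ℝ)-↑d)| := by ring_nf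
    _ ≤ _ := abs_add_le _ _

lemma tc_edist_le {l m : ℝ≥0 → ℝ≥0} {t0 tn a k : ℝ≥0} (hk : 0 < k) (ha : a < t0)
    (s : ℝ≥0) :
    edist (tc l m t0 tn a k s) s ≤
      (⨆ u, edist (l u) u) + (⨆ u, edist (m u) u) + edist tn t0
        + ((((t0 - a) ⊔ ((t0 - a) * k)) : ℝ≥0) : ℝ≥0∞) := by
  set El := ⨆ u, edist (l u) u
  set Em := ⨆ u, edist (m u) u
  set W : ℝ≥0 := (t0 - a) ⊔ ((t0 - a) * k)
  unfold tc
  rcases lt_or_ge s t0 with hs | hs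
  · rw [if_pos hs]
    have h1 : edist (l (phi a k s)) s ≤ edist (l (phi a k s)) (phi a k s) + edist (phi a k s) s :=
      edist_triangle _ _ _
    have h2 : edist (l (phi a k s)) (phi a k s) ≤ El := le_iSup (fun u => edist (l u) u) _
    have h3 : edist (phi a k s) s ≤ (W : ℝ≥0∞) := by
      rcases le_or_gt s a with hsa | hsa
      · rw [phi_of_le hsa, edist_self]; exact zero_le
      · rw [edist_nndist, ENNReal.coe_le_coe, NNReal.nndist_eq]
        apply sup_le
        · calc phi a k s - s ≤ (a + (t0 - a) * k) - a :=
                tsub_le_tsub (phi_lt hk ha hs).le hsa.le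
            _ = (t0 - a) * k := add_tsub_cancel_left _ _
            _ ≤ W := le_sup_right
        · calc s - phi a k s ≤ t0 - a := tsub_le_tsub hs.le (phi_ge hsa)
            _ ≤ W := le_sup_left
    calc edist (l (phi a k s)) s ≤ El + (W : ℝ≥0∞) :=
          h1.trans (add_le_add h2 h3)
      _ ≤ El + Em + edist tn t0 + (W : ℝ≥0∞) :=
          add_le_add (le_add_right (le_add_right le_rfl)) le_rfl
  · rw [if_neg (not_lt.mpr hs)]
    have hrw : s = t0 + (s - t0) := (add_tsub_cancel_of_le hs).symm
    calc edist (tn + m (s - t0)) s = edist (tn + m (s - t0)) (t0 + (s - t0)) := by rw [← hrw]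
      _ ≤ edist tn t0 + edist (m (s - t0)) (s - t0) := nnreal_dist_add_add _ _ _ _
      _ ≤ edist tn t0 + Em := add_le_add le_rfl (le_iSup (fun u => edist (m u) u) _)
      _ ≤ El + Em + edist tn t0 + (W : ℝ≥0∞) := by
          rw [add_comm (edist tn t0) Em]
          calc Em + edist tn t0 ≤ El + (Em + edist tn t0) := le_add_self
            _ = El + Em + edist tn t0 := (add_assoc _ _ _).symm
            _ ≤ _ := le_self_add


end Stmt1Aux

/-- continuity of the concatenation map. -/
theorem statement1 {V : Type*} [MetricSpace V] [PolishSpace V]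
    (f h : ℕ → ℝ≥0 → V) (F H : ℝ≥0 → V) (t : ℕ → ℝ≥0) (t0 : ℝ≥0)
    (hfc : ∀ n, Cadlag (f n)) (hhc : ∀ n, Cadlag (h n))
    (hFc : Cadlag F) (hHc : Cadlag H)
    (ht0 : 0 < t0) (ht : Filter.Tendsto t Filter.atTop (nhds t0))
    (hfF : J1Tendsto Filter.atTop f F) (hhH : J1Tendsto Filter.atTop h H)
    (hjump : Filter.Tendsto (fun n => jumpSize (f n) (t n)) Filter.atTop
      (nhds (jumpSize F t0))) :
    J1Tendsto Filter.atTop (fun n => concatMap (f n) (t n) (h n))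
      (concatMap F t0 H) := by
  classical
  obtain ⟨l, hl, hldist, Mf, hMfub, hMfconv⟩ := hfF
  obtain ⟨μ, hμ, hμdist, Mh, hMhub, hMhconv⟩ := hhH
  obtain ⟨mf, hmfM, hmf⟩ := hMfub (t0 + 1)
  set c : ℕ → ℝ≥0 := fun n => Function.surjInv (hl n).2.2 (t n) with hc_def
  have hcn : ∀ n, l n (c n) = t n := fun n => Function.surjInv_eq (hl n).2.2 (t n)
  set d : ℕ → ℝ≥0 := fun n => nndist (c n) t0 with hd_def
  set β : ℕ → ℝ≥0 := fun n => ((n : ℝ≥0) + 1)⁻¹ with hβ_def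
  have hβpos : ∀ n, 0 < β n := fun n => by
    simp only [hβ_def]
    rw [pos_iff_ne_zero]
    simp
  set η : ℕ → ℝ≥0 := fun n => min t0 (2 * d n + β n) with hη_def
  have hηpos : ∀ n, 0 < η n := fun n => lt_min ht0 (lt_of_lt_of_le (hβpos n) le_add_self)
  have hηle : ∀ n, η n ≤ t0 := fun n => min_le_left _ _
  set a : ℕ → ℝ≥0 := fun n => t0 - η n with ha_def
  have ha_lt : ∀ n, a n < t0 := fun n => tsub_lt_self ht0 (hηpos n)
  set k : ℕ → ℝ≥0 := fun n => (c n - a n) / (t0 - a n) with hk_def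
  have hcpos : ∀ n, 0 < t n → 0 < c n := by
    intro n hn
    rw [pos_iff_ne_zero]
    intro h0
    apply hn.ne'
    rw [← hcn n, h0, Stmt1Aux.timeChange_zero (hl n)]
  have hcd : ∀ n, c n - t0 ≤ d n := by
    intro n
    simp only [hd_def]
    rw [NNReal.nndist_eq]
    exact le_sup_left
  have hct0 : ∀ n, c n ≤ t0 + d n := fun n => tsub_le_iff_left.mp (hcd n)
  have hac : ∀ n, 0 < t n → a n < c n := by
    intro n hn
    rcases le_or_gt t0 (c n) with hh | hh
    · exact (ha_lt n).trans_le hh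
    · have hdn : d n = t0 - c n := by
        simp only [hd_def]
        rw [NNReal.nndist_eq, tsub_eq_zero_of_le hh.le]
        exact sup_eq_right.mpr (zero_le)
      have hcdn : c n + d n = t0 := by rw [hdn]; exact add_tsub_cancel_of_le hh.le
      simp only [ha_def]
      rw [tsub_lt_iff_left (hηle n)]
      rcases min_cases t0 (2 * d n + β n) with ⟨he, -⟩ | ⟨he, -⟩
      · simp only [hη_def]
        rw [he]
        exact lt_add_of_pos_right _ (hcpos n hn)
      · simp only [hη_def]
        rw [he]
        calc t0 < t0 + (d n + β n) :=
              lt_add_of_pos_right _ (lt_of_lt_of_le (hβpos n) le_add_self)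
          _ = c n + d n + (d n + β n) := by rw [hcdn]
          _ = 2 * d n + β n + c n := by ring
  have hk_pos : ∀ n, 0 < t n → 0 < k n := by
    intro n hn
    simp only [hk_def]
    exact div_pos (tsub_pos_of_lt (hac n hn)) (tsub_pos_of_lt (ha_lt n))
  have hceq : ∀ n, 0 < t n → a n + (t0 - a n) * k n = c n := by
    intro n hn
    have h1 : (t0 - a n) * k n = c n - a n := by
      simp only [hk_def]
      exact mul_div_cancel₀ _ (tsub_pos_of_lt (ha_lt n)).ne'
    rw [h1, add_tsub_cancel_of_le (hac n hn).le]
  set L : ℕ → ℝ≥0 → ℝ≥0 :=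
    fun n => if 0 < t n then Stmt1Aux.tc (l n) (μ n) t0 (t n) (a n) (k n) else id with hL_def
  have hLn_eq : ∀ n, 0 < t n → L n = Stmt1Aux.tc (l n) (μ n) t0 (t n) (a n) (k n) := by
    intro n hn
    simp only [hL_def]
    rw [if_pos hn]
  -- eventual smallness facts
  have Ev_good : ∀ᶠ n in atTop, 0 < t n := ht.eventually (lt_mem_nhds ht0)
  have Evl : ∀ x : ℝ≥0, 0 < x → ∀ᶠ n in atTop, (⨆ u, edist (l n u) u) ≤ (x : ℝ≥0∞) := by
    intro x hx
    filter_upwards [hldist.eventually (gt_mem_nhds (ENNReal.coe_pos.mpr hx))] with n hn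
    exact hn.le
  have Evμ : ∀ x : ℝ≥0, 0 < x → ∀ᶠ n in atTop, (⨆ u, edist (μ n u) u) ≤ (x : ℝ≥0∞) := by
    intro x hx
    filter_upwards [hμdist.eventually (gt_mem_nhds (ENNReal.coe_pos.mpr hx))] with n hn
    exact hn.le
  have Evt : ∀ x : ℝ≥0, 0 < x → ∀ᶠ n in atTop, edist (t n) t0 ≤ (x : ℝ≥0∞) := by
    intro x hx
    filter_upwards [ht (Metric.closedBall_mem_nhds t0 (by exact_mod_cast hx))] with n hn
    rw [edist_le_coe, ← NNReal.coe_le_coe, coe_nndist]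
    exact Metric.mem_closedBall.mp hn
  have Evd : ∀ x : ℝ≥0, 0 < x → ∀ᶠ n in atTop, d n ≤ x := by
    intro x hx
    filter_upwards [Evl (x/2) (half_pos hx), Evt (x/2) (half_pos hx)] with n h1 h2
    have hb : (edist (c n) t0 : ℝ≥0∞) ≤ ↑(x/2) + ↑(x/2) := by
      calc edist (c n) t0 ≤ edist (c n) (l n (c n)) + edist (l n (c n)) t0 :=
            edist_triangle _ _ _
        _ ≤ (⨆ u, edist (l n u) u) + edist (t n) t0 := by
            refine add_le_add ?_ ?_
            · rw [edist_comm]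
              exact le_iSup (fun u => edist (l n u) u) (c n)
            · rw [hcn n]
        _ ≤ _ := add_le_add h1 h2
    rw [← ENNReal.coe_add, add_halves, edist_nndist, ENNReal.coe_le_coe] at hb
    exact hb
  have Evβ : ∀ x : ℝ≥0, 0 < x → ∀ᶠ n in atTop, β n ≤ x := by
    intro x hx
    obtain ⟨N, hN⟩ := exists_nat_ge (x⁻¹ : ℝ≥0)
    refine eventually_atTop.mpr ⟨N, fun b hb => ?_⟩
    have hxi : 0 < x⁻¹ := by
      rw [pos_iff_ne_zero]
      simp [hx.ne']
    have h1 : x⁻¹ ≤ (b : ℝ≥0) + 1 := hN.trans (by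
      calc ((N:ℝ≥0)) ≤ (b:ℝ≥0) := by exact_mod_cast hb
        _ ≤ (b:ℝ≥0) + 1 := le_self_add)
    calc β b = ((b:ℝ≥0)+1)⁻¹ := rfl
      _ ≤ (x⁻¹)⁻¹ := by gcongr
      _ = x := inv_inv x
  have Evη : ∀ x : ℝ≥0, 0 < x → ∀ᶠ n in atTop, η n ≤ x := by
    intro x hx
    filter_upwards [Evd (x/4) (div_pos hx (by norm_num)), Evβ (x/2) (half_pos hx)]
      with n h1 h2
    calc η n ≤ 2 * d n + β n := min_le_right _ _
      _ ≤ 2 * (x/4) + x/2 := add_le_add (by gcongr) h2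
      _ = x := by rw [← NNReal.coe_inj]; push_cast; ring
  refine ⟨L, ?_, ?_, ?_⟩
  · -- time changes
    intro n
    by_cases hn : 0 < t n
    · rw [hLn_eq n hn]
      exact Stmt1Aux.tc_isTimeChange (hl n) (hμ n) (hk_pos n hn) (ha_lt n)
        (by rw [hceq n hn]; exact hcn n)
    · simp only [hL_def]
      rw [if_neg hn]
      exact ⟨strictMono_id, Function.bijective_id⟩
  · -- distortion
    rw [ENNReal.tendsto_nhds_zero]
    intro ε hε
    obtain ⟨r, hr0, hrε⟩ := ENNReal.lt_iff_exists_nnreal_btwn.mp hε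
    have hr0' : 0 < r := by exact_mod_cast hr0
    filter_upwards [Ev_good, Evl (r/4) (div_pos hr0' (by norm_num)),
      Evμ (r/4) (div_pos hr0' (by norm_num)), Evt (r/4) (div_pos hr0' (by norm_num)),
      Evη (r/8) (div_pos hr0' (by norm_num)), Evd (r/8) (div_pos hr0' (by norm_num))]
      with n hg h1 h2 h3 h4 h5
    refine le_trans ?_ hrε.le
    rw [hLn_eq n hg]
    apply iSup_le
    intro s
    refine (Stmt1Aux.tc_edist_le (hk_pos n hg) (ha_lt n) s).trans ?_
    have hta : t0 - a n = η n := by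
      simp only [ha_def]
      exact tsub_tsub_cancel_of_le (hηle n)
    have hck : (t0 - a n) * k n = c n - a n := by
      have hh := hceq n hg
      rw [add_comm] at hh
      exact eq_tsub_of_add_eq hh
    have hW : ((t0 - a n) ⊔ ((t0 - a n) * k n) : ℝ≥0) ≤ r/4 := by
      rw [hck, hta]
      apply sup_le
      · exact h4.trans (by rw [← NNReal.coe_le_coe]; push_cast; linarith [r.coe_nonneg])
      · calc c n - a n ≤ (c n - t0) + (t0 - a n) := tsub_le_tsub_add_tsub
          _ = (c n - t0) + η n := by rw [hta]
          _ ≤ d n + η n := add_le_add (hcd n) le_rfl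
          _ ≤ r/8 + r/8 := add_le_add h5 h4
          _ ≤ r/4 := by rw [← NNReal.coe_le_coe]; push_cast; linarith
    calc (⨆ u, edist (l n u) u) + (⨆ u, edist (μ n u) u) + edist (t n) t0
          + ((((t0 - a n) ⊔ ((t0 - a n) * k n)) : ℝ≥0) : ℝ≥0∞)
        ≤ (↑(r/4) + ↑(r/4) + ↑(r/4) + ↑(r/4) : ℝ≥0∞) :=
          add_le_add (add_le_add (add_le_add h1 h2) h3) (ENNReal.coe_le_coe.mpr hW)
      _ ≤ ↑r := by
          rw [← ENNReal.coe_add, ← ENNReal.coe_add, ← ENNReal.coe_add, ENNReal.coe_le_coe,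
            ← NNReal.coe_le_coe]
          push_cast
          linarith [r.coe_nonneg]
  · -- uniform convergence on compacts
    refine ⟨(fun m' => t0 + m') '' Mh, ?_, ?_⟩
    · intro rr
      obtain ⟨m', hm'M, hm'⟩ := hMhub rr
      exact ⟨t0 + m', mem_image_of_mem _ hm'M, hm'.trans le_add_self⟩
    · rintro m ⟨m', hm'M, rfl⟩
      rw [ENNReal.tendsto_nhds_zero]
      intro ε hε
      obtain ⟨r, hr0, hrε⟩ := ENNReal.lt_iff_exists_nnreal_btwn.mp hε
      have hr0' : 0 < r := by exact_mod_cast hr0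
      set r8 : ℝ≥0 := r / 8 with hr8_def
      have hr8 : 0 < r8 := div_pos hr0' (by norm_num)
      have hr8R : (0:ℝ) < (r8:ℝ) := by exact_mod_cast hr8
      have hr8r : (r8 : ℝ) = (r : ℝ)/8 := by rw [hr8_def]; push_cast; ring
      obtain ⟨FL, hFL⟩ := hFc.2 t0 ht0
      have hNB : (nhdsWithin t0 (Set.Iio t0)).NeBot := nhdsWithin_Iio_self_neBot' ⟨0, ht0⟩
      have hJ : jumpSize F t0 = dist (F t0) FL := by
        rw [show jumpSize F t0 = dist (F t0) (Function.leftLim F t0) from rfl,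
          leftLim_eq_of_tendsto (h := hNB) hFL]
      obtain ⟨lo, hlo, hIoo⟩ := (mem_nhdsLT_iff_exists_Ioo_subset' ht0).mp
        (hFL (Metric.closedBall_mem_nhds FL hr8R))
      have hlo' : lo < t0 := hlo
      have hFlt : ∀ u, u ∈ Ioo lo t0 → dist (F u) FL ≤ (r8:ℝ) := fun u hu =>
        Metric.mem_closedBall.mp (hIoo hu)
      obtain ⟨hi, hhi, hIco⟩ := mem_nhdsGE_iff_exists_Ico_subset.mp
        ((hFc.1 t0) (Metric.closedBall_mem_nhds (F t0) hr8R))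
      have hhi' : t0 < hi := hhi
      have hFrt : ∀ u, u ∈ Ico t0 hi → dist (F u) (F t0) ≤ (r8:ℝ) := fun u hu =>
        Metric.mem_closedBall.mp (hIco hu)
      have hx1 : (0:ℝ≥0) < (t0 - lo)/2 := div_pos (tsub_pos_of_lt hlo') (by norm_num)
      set x2 : ℝ≥0 := min 1 ((hi - t0)/2) with hx2_def
      have hx2 : 0 < x2 := lt_min one_pos (div_pos (tsub_pos_of_lt hhi') (by norm_num))
      filter_upwards [Ev_good,
        (hMfconv mf hmfM).eventually (gt_mem_nhds (ENNReal.coe_pos.mpr hr8)),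
        (hMhconv m' hm'M).eventually (gt_mem_nhds (ENNReal.coe_pos.mpr hr8)),
        hjump.eventually (Metric.closedBall_mem_nhds _ hr8R),
        Evη ((t0 - lo)/2) hx1, Evd x2 hx2] with n hg hSfn hShn hJn hηn hdn
      have hfp : ∀ u, u ≤ mf → dist (f n (l n u)) (F u) ≤ (r8:ℝ) := by
        intro u hu
        have hh := (le_iSup (fun s : Icc (0:ℝ≥0) mf => edist (f n (l n (s:ℝ≥0))) (F (s:ℝ≥0)))
          ⟨u, ⟨zero_le, hu⟩⟩).trans hSfn.le
        rwa [edist_le_coe, ← NNReal.coe_le_coe, coe_nndist] at hh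
      have hhp : ∀ u, u ≤ m' → dist (h n (μ n u)) (H u) ≤ (r8:ℝ) := by
        intro u hu
        have hh := (le_iSup (fun s : Icc (0:ℝ≥0) m' => edist (h n (μ n (s:ℝ≥0))) (H (s:ℝ≥0)))
          ⟨u, ⟨zero_le, hu⟩⟩).trans hShn.le
        rwa [edist_le_coe, ← NNReal.coe_le_coe, coe_nndist] at hh
      have hJev : |jumpSize (f n) (t n) - jumpSize F t0| ≤ (r8:ℝ) := by
        have hh := Metric.mem_closedBall.mp hJn
        rwa [Real.dist_eq] at hh
      have hcmf : c n ≤ mf :=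
        ((hct0 n).trans (add_le_add le_rfl (hdn.trans (min_le_left _ _)))).trans hmf
      have hchi : c n < hi := by
        refine ((hct0 n).trans (add_le_add le_rfl hdn)).trans_lt ?_
        have hh : x2 < hi - t0 :=
          (min_le_right _ _).trans_lt (half_lt_self (tsub_pos_of_lt hhi'))
        exact lt_tsub_iff_left.mp hh
      have halo : lo < a n := by
        simp only [ha_def]
        rw [lt_tsub_iff_right]
        calc lo + η n ≤ lo + (t0 - lo)/2 := add_le_add le_rfl hηn
          _ < lo + (t0 - lo) := add_lt_add_right (half_lt_self (tsub_pos_of_lt hlo')) _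
          _ = t0 := add_tsub_cancel_of_le hlo'.le
      refine le_trans ?_ hrε.le
      apply iSup_le
      intro p
      have hsm : (p : ℝ≥0) ≤ t0 + m' := p.2.2
      rw [hLn_eq n hg, edist_le_coe, ← NNReal.coe_le_coe, coe_nndist]
      rcases lt_or_ge (p : ℝ≥0) t0 with hst | hst
      · -- before the switch time
        have hphic : Stmt1Aux.phi (a n) (k n) p < c n := by
          rw [← hceq n hg]
          exact Stmt1Aux.phi_lt (hk_pos n hg) (ha_lt n) hst
        have hlts : l n (Stmt1Aux.phi (a n) (k n) p) < t n := by
          rw [← hcn n]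
          exact (hl n).1 hphic
        simp only [Stmt1Aux.tc, concatMap, if_pos hst]
        rw [if_pos hlts]
        have hphimf : Stmt1Aux.phi (a n) (k n) p ≤ mf := hphic.le.trans hcmf
        have h1 := hfp _ hphimf
        rcases le_or_gt (p : ℝ≥0) (a n) with hsa | hsa
        · rw [Stmt1Aux.phi_of_le hsa] at h1 ⊢
          refine h1.trans ?_
          rw [hr8r]
          linarith [r.coe_nonneg]
        · have hsIoo : (p : ℝ≥0) ∈ Ioo lo t0 := ⟨halo.trans hsa, hst⟩
          have hFs := hFlt _ hsIoo
          rcases lt_or_ge (Stmt1Aux.phi (a n) (k n) p) t0 with hp | hp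
          · have hpIoo : Stmt1Aux.phi (a n) (k n) p ∈ Ioo lo t0 :=
              ⟨halo.trans_le (Stmt1Aux.phi_ge hsa), hp⟩
            have h2 := hFlt _ hpIoo
            calc dist (f n (l n (Stmt1Aux.phi (a n) (k n) p))) (F p)
                ≤ dist (f n (l n (Stmt1Aux.phi (a n) (k n) p))) (F (Stmt1Aux.phi (a n) (k n) p))
                  + dist (F (Stmt1Aux.phi (a n) (k n) p)) FL + dist FL (F p) :=
                  dist_triangle4 _ _ _ _
              _ ≤ (r8:ℝ) + (r8:ℝ) + (r8:ℝ) :=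
                  add_le_add (add_le_add h1 h2) (by rw [dist_comm]; exact hFs)
              _ ≤ (r:ℝ) := by rw [hr8r]; linarith [r.coe_nonneg]
          · -- the phase where phi jumps past t0 : use the jump hypothesis
            have htc : t0 < c n := lt_of_le_of_lt hp hphic
            have h2 := hFrt _ ⟨hp, hphic.trans hchi⟩
            have hA : dist (f n (t n)) (F t0) ≤ 2*(r8:ℝ) := by
              rw [← hcn n]
              calc dist (f n (l n (c n))) (F t0)
                  ≤ dist (f n (l n (c n))) (F (c n)) + dist (F (c n)) (F t0) :=
                    dist_triangle _ _ _
                _ ≤ (r8:ℝ) + (r8:ℝ) := add_le_add (hfp _ hcmf) (hFrt _ ⟨htc.le, hchi⟩)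
                _ = 2*(r8:ℝ) := by ring
            have hB : dist (Function.leftLim (f n) (t n)) (F t0) ≤ 2*(r8:ℝ) := by
              obtain ⟨ln', hln'⟩ := (hfc n).2 (t n) hg
              have hNBt : (nhdsWithin (t n) (Set.Iio (t n))).NeBot :=
                nhdsWithin_Iio_self_neBot' ⟨0, hg⟩
              rw [leftLim_eq_of_tendsto (h := hNBt) hln']
              have hlcont : Continuous (l n) := by
                have hcont := (StrictMono.orderIsoOfSurjective (l n) (hl n).1 (hl n).2.2).continuous
                rwa [StrictMono.coe_orderIsoOfSurjective] at hcont
              have hmapl : Tendsto (l n) (nhdsWithin (c n) (Set.Iio (c n)))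
                  (nhdsWithin (t n) (Set.Iio (t n))) := by
                rw [tendsto_nhdsWithin_iff]
                constructor
                · rw [← hcn n]
                  exact (hlcont.tendsto (c n)).mono_left nhdsWithin_le_nhds
                · filter_upwards [self_mem_nhdsWithin] with u hu
                  rw [mem_Iio, ← hcn n]
                  exact (hl n).1 hu
              have hNBc : (nhdsWithin (c n) (Set.Iio (c n))).NeBot :=
                nhdsWithin_Iio_self_neBot' ⟨0, ht0.trans htc⟩
              refine le_of_tendsto ((hln'.comp hmapl).dist tendsto_const_nhds) ?_
              filter_upwards [Ioo_mem_nhdsLT_of_mem (⟨htc, le_rfl⟩ : c n ∈ Ioc t0 (c n))]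
                with u hu
              calc dist ((f n ∘ l n) u) (F t0)
                  ≤ dist (f n (l n u)) (F u) + dist (F u) (F t0) := dist_triangle _ _ _
                _ ≤ (r8:ℝ) + (r8:ℝ) :=
                    add_le_add (hfp _ (hu.2.le.trans hcmf)) (hFrt _ ⟨hu.1.le, hu.2.trans hchi⟩)
                _ = 2*(r8:ℝ) := by ring
            have hJle : dist (F t0) FL ≤ 5*(r8:ℝ) := by
              rw [← hJ]
              have h4 : jumpSize (f n) (t n) ≤ 4*(r8:ℝ) := by
                rw [show jumpSize (f n) (t n)
                    = dist (f n (t n)) (Function.leftLim (f n) (t n)) from rfl]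
                calc dist (f n (t n)) (Function.leftLim (f n) (t n))
                    ≤ dist (f n (t n)) (F t0) + dist (Function.leftLim (f n) (t n)) (F t0) :=
                      dist_triangle_right _ _ _
                  _ ≤ 2*(r8:ℝ) + 2*(r8:ℝ) := add_le_add hA hB
                  _ = 4*(r8:ℝ) := by ring
              have habs := abs_le.mp hJev
              linarith [habs.1]
            calc dist (f n (l n (Stmt1Aux.phi (a n) (k n) p))) (F p)
                ≤ dist (f n (l n (Stmt1Aux.phi (a n) (k n) p))) (F (Stmt1Aux.phi (a n) (k n) p))
                  + dist (F (Stmt1Aux.phi (a n) (k n) p)) (F t0) + dist (F t0) (F p) :=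
                  dist_triangle4 _ _ _ _
              _ ≤ (r8:ℝ) + (r8:ℝ) + (dist (F t0) FL + dist FL (F p)) :=
                  add_le_add (add_le_add h1 h2) (dist_triangle _ _ _)
              _ ≤ (r8:ℝ) + (r8:ℝ) + (5*(r8:ℝ) + (r8:ℝ)) := by
                  refine add_le_add le_rfl (add_le_add hJle ?_)
                  rw [dist_comm]
                  exact hFs
              _ ≤ (r:ℝ) := by rw [hr8r]; linarith [r.coe_nonneg]
      · -- after the switch time
        have hns : ¬ ((p : ℝ≥0) < t0) := not_lt.mpr hst
        simp only [Stmt1Aux.tc, concatMap, if_neg hns]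
        rw [if_neg (not_lt.mpr le_self_add), add_tsub_cancel_left]
        refine (hhp ((p : ℝ≥0) - t0) ?_).trans ?_
        · rw [tsub_le_iff_left]
          exact hsm
        · rw [hr8r]
          linarith [r.coe_nonneg]
end

section
/- Define the shift operator θ_t(f) = f(t + ·). If f_n → f in the J1 topology, t_n → t with t > 0, and Δf_n(t_n) → Δf(t), then θ_{t_n}(f_n) → θ_t(f) in the J1 topology. -/
open scoped NNReal ENNReal Topology
open Filter Set

noncomputable section

/-- The shift operator `θ_t(f) = f(t + ·)`. -/
def shiftMap {V : Type*} (t : ℝ≥0) (f : ℝ≥0 → V) : ℝ≥0 → V := fun s => f (t + s)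

end

noncomputable section
namespace ShiftPf
open Set Filter


/-- Convex tent: piecewise-linear increasing bijection of ℝ, identity outside
`(a-r, a+r)`, sending `a` to `b` (designed for `a - r < b ≤ a`). -/
def tentC (a b r : ℝ) : ℝ → ℝ := fun s =>
  max (min s ((a - r) + ((b - (a - r))/r) * (s - (a - r))))
      (min s (b + ((a + r - b)/r) * (s - a)))

variable {a b r : ℝ}

lemma tentC_le (s : ℝ) : tentC a b r s ≤ s := by
  simp [tentC]

lemma tentC_strictMono (hr : 0 < r) (h1 : a - r < b) (h2 : b ≤ a) :
    StrictMono (tentC a b r) := by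
  have s1 : 0 < (b - (a - r))/r := by
    have : 0 < b - (a - r) := by linarith
    positivity
  have s2 : 0 < (a + r - b)/r := by
    have : 0 < a + r - b := by linarith
    positivity
  intro x y hxy
  have m1 : (a - r) + ((b - (a - r))/r) * (x - (a - r)) <
      (a - r) + ((b - (a - r))/r) * (y - (a - r)) := by nlinarith
  have m2 : b + ((a + r - b)/r) * (x - a) < b + ((a + r - b)/r) * (y - a) := by nlinarith
  exact max_lt_max (min_lt_min hxy m1) (min_lt_min hxy m2)

lemma tentC_left (hr : 0 < r) (h1 : a - r < b) (h2 : b ≤ a) {s : ℝ} (hs : s ≤ a - r) :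
    tentC a b r s = s := by
  have hL1 : s ≤ (a - r) + ((b - (a - r))/r) * (s - (a - r)) := by
    rw [← sub_le_iff_le_add', div_mul_eq_mul_div, le_div_iff₀ hr]
    nlinarith
  have : min s ((a - r) + ((b - (a - r))/r) * (s - (a - r))) = s := min_eq_left hL1
  simp only [tentC, this]
  exact max_eq_left (min_le_left _ _)

lemma tentC_right (hr : 0 < r) (h1 : a - r < b) (h2 : b ≤ a) {s : ℝ} (hs : a + r ≤ s) :
    tentC a b r s = s := by
  have hL2 : s ≤ b + ((a + r - b)/r) * (s - a) := by
    rw [← sub_le_iff_le_add', div_mul_eq_mul_div, le_div_iff₀ hr]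
    nlinarith
  have h2' : min s (b + ((a + r - b)/r) * (s - a)) = s := min_eq_left hL2
  simp only [tentC, h2']
  exact max_eq_right (min_le_left _ _)

lemma tentC_apex (hr : 0 < r) (h2 : b ≤ a) : tentC a b r a = b := by
  have e1 : (a - r) + ((b - (a - r))/r) * (a - (a - r)) = b := by
    field_simp
    ring
  have e2 : b + ((a + r - b)/r) * (a - a) = b := by ring
  simp only [tentC, e1, e2, min_eq_right h2, max_self]

lemma tentC_ge (hr : 0 < r) (h1 : a - r < b) (h2 : b ≤ a) (s : ℝ) :
    s - (a - b) ≤ tentC a b r s := by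
  rcases le_total s a with hs | hs
  · refine le_trans ?_ (le_max_left _ _)
    apply le_min (by linarith)
    rw [← sub_le_iff_le_add', div_mul_eq_mul_div, le_div_iff₀ hr]
    nlinarith [mul_nonneg (sub_nonneg.2 hs) (sub_nonneg.2 h2)]
  · refine le_trans ?_ (le_max_right _ _)
    apply le_min (by linarith)
    rw [← sub_le_iff_le_add', div_mul_eq_mul_div, le_div_iff₀ hr]
    nlinarith [mul_nonneg (sub_nonneg.2 hs) (sub_nonneg.2 h2)]

lemma tentC_continuous : Continuous (tentC a b r) := by
  unfold tentC; fun_prop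

lemma tentC_surjective (hr : 0 < r) (h1 : a - r < b) (h2 : b ≤ a) :
    Function.Surjective (tentC a b r) := by
  intro y
  rcases le_total y (a - r) with hy | hy
  · exact ⟨y, tentC_left hr h1 h2 hy⟩
  rcases le_total (a + r) y with hy' | hy'
  · exact ⟨y, tentC_right hr h1 h2 hy'⟩
  have hcont : ContinuousOn (tentC a b r) (Icc (a - r) (a + r)) :=
    tentC_continuous.continuousOn
  have hmem : y ∈ Icc (tentC a b r (a - r)) (tentC a b r (a + r)) := by
    rw [tentC_left hr h1 h2 le_rfl, tentC_right hr h1 h2 le_rfl]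
    exact ⟨hy, hy'⟩
  obtain ⟨s, _, hs⟩ := intermediate_value_Icc (by linarith) hcont hmem
  exact ⟨s, hs⟩


/-- General tent: increasing bijection of ℝ, identity outside `(a-r, a+r)`,
sending `a` to `b`, displacement at most `|b - a|`. -/
def tent (a b r : ℝ) : ℝ → ℝ :=
  if b ≤ a then tentC a b r else fun s => -(tentC (-a) (-b) r (-s))

variable {a b r : ℝ}

lemma tent_strictMono (hr : 0 < r) (hd : |b - a| < r) : StrictMono (tent a b r) := by
  rw [abs_sub_lt_iff] at hd
  unfold tent
  split_ifs with h
  · exact tentC_strictMono hr (by linarith) h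
  · intro x y hxy
    have := tentC_strictMono (a := -a) (b := -b) hr (by linarith) (by linarith)
      (neg_lt_neg hxy)
    dsimp
    linarith

lemma tent_apex (hr : 0 < r) (hd : |b - a| < r) : tent a b r a = b := by
  rw [abs_sub_lt_iff] at hd
  unfold tent
  split_ifs with h
  · exact tentC_apex hr h
  · show -(tentC (-a) (-b) r (-a)) = b
    rw [tentC_apex hr (by linarith)]; ring

lemma tent_left (hr : 0 < r) (hd : |b - a| < r) {s : ℝ} (hs : s ≤ a - r) :
    tent a b r s = s := by
  rw [abs_sub_lt_iff] at hd
  unfold tent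
  split_ifs with h
  · exact tentC_left hr (by linarith) h hs
  · show -(tentC (-a) (-b) r (-s)) = s
    rw [tentC_right hr (by linarith) (by linarith) (by linarith)]; ring

lemma tent_right (hr : 0 < r) (hd : |b - a| < r) {s : ℝ} (hs : a + r ≤ s) :
    tent a b r s = s := by
  rw [abs_sub_lt_iff] at hd
  unfold tent
  split_ifs with h
  · exact tentC_right hr (by linarith) h hs
  · show -(tentC (-a) (-b) r (-s)) = s
    rw [tentC_left hr (by linarith) (by linarith) (by linarith)]; ring

lemma tent_dist (hr : 0 < r) (hd : |b - a| < r) (s : ℝ) :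
    |tent a b r s - s| ≤ |b - a| := by
  rw [abs_sub_lt_iff] at hd
  unfold tent
  split_ifs with h
  · have h1 := tentC_le (a := a) (b := b) (r := r) s
    have h2 := tentC_ge hr (by linarith) h s
    rw [abs_sub_le_iff, abs_of_nonpos (by linarith)]
    constructor <;> linarith
  · push_neg at h
    have h1 := tentC_le (a := -a) (b := -b) (r := r) (-s)
    have h2 := tentC_ge (a := -a) (b := -b) hr (by linarith) (by linarith) (-s)
    rw [abs_sub_le_iff, abs_of_nonneg (by linarith)]
    constructor <;> [skip; skip] <;> dsimp <;> linarith

lemma tent_surjective (hr : 0 < r) (hd : |b - a| < r) :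
    Function.Surjective (tent a b r) := by
  rw [abs_sub_lt_iff] at hd
  unfold tent
  split_ifs with h
  · exact tentC_surjective hr (by linarith) h
  · intro y
    obtain ⟨s, hs⟩ := tentC_surjective (a := -a) (b := -b) hr (by linarith) (by linarith) (-y)
    exact ⟨-s, by dsimp; rw [neg_neg, hs, neg_neg]⟩

/-- Correction time change on `ℝ≥0`: identity outside `(a-r, a+r)`, maps `a` to `b`. -/
def corr (a b r : ℝ≥0) : ℝ≥0 → ℝ≥0 :=
  if 0 < r ∧ r < a ∧ |(b : ℝ) - a| < r then
    fun s => Real.toNNReal (tent a b r s)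
  else id

section
variable {a b r : ℝ≥0} (hc : 0 < r ∧ r < a ∧ |(b : ℝ) - a| < r)
include hc

lemma tent_nonneg {s : ℝ} (hs : 0 ≤ s) : 0 ≤ tent (a:ℝ) b r s := by
  obtain ⟨h1, h2, h3⟩ := hc
  rcases le_total s ((a:ℝ) - r) with h | h
  · rw [tent_left (by exact_mod_cast h1) h3 h]; exact hs
  · calc (0:ℝ) ≤ (a:ℝ) - r := by
          have : (r:ℝ) ≤ a := le_of_lt (by exact_mod_cast h2)
          linarith
      _ = tent (a:ℝ) b r ((a:ℝ) - r) := (tent_left (by exact_mod_cast h1) h3 le_rfl).symm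
      _ ≤ tent (a:ℝ) b r s := ((tent_strictMono (by exact_mod_cast h1) h3).monotone h)

lemma corr_coe (s : ℝ≥0) : ((corr a b r s : ℝ≥0) : ℝ) = tent (a:ℝ) b r s := by
  rw [corr, if_pos hc]
  exact Real.coe_toNNReal _ (tent_nonneg hc s.2)

lemma corr_strictMono : StrictMono (corr a b r) := by
  intro x y hxy
  have h := tent_strictMono (a := (a:ℝ)) (b := b) (r := r)
    (by exact_mod_cast hc.1) hc.2.2 (show (x:ℝ) < (y:ℝ) by exact_mod_cast hxy)
  rw [← NNReal.coe_lt_coe, corr_coe hc, corr_coe hc]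
  exact h

lemma corr_surjective : Function.Surjective (corr a b r) := by
  intro y
  obtain ⟨s, hs⟩ := tent_surjective (a := (a:ℝ)) (b := b) (r := r)
    (by exact_mod_cast hc.1) hc.2.2 (y : ℝ)
  have hs0 : 0 ≤ s := by
    by_contra hneg
    push_neg at hneg
    have har : (0:ℝ) ≤ (a:ℝ) - r := by
      have : (r:ℝ) ≤ a := le_of_lt (by exact_mod_cast hc.2.1)
      linarith
    rw [tent_left (by exact_mod_cast hc.1) hc.2.2 (by linarith)] at hs
    exact absurd (hs ▸ y.2) (not_le.2 hneg)
  refine ⟨Real.toNNReal s, ?_⟩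
  have : ((Real.toNNReal s : ℝ≥0) : ℝ) = s := Real.coe_toNNReal _ hs0
  rw [← NNReal.coe_inj, corr_coe hc, this, hs]

lemma corr_apex : corr a b r a = b := by
  rw [← NNReal.coe_inj, corr_coe hc, tent_apex (by exact_mod_cast hc.1) hc.2.2]

lemma corr_left {s : ℝ≥0} (hs : s ≤ a - r) : corr a b r s = s := by
  rw [← NNReal.coe_inj, corr_coe hc]
  refine tent_left (by exact_mod_cast hc.1) hc.2.2 ?_
  have hra : r ≤ a := hc.2.1.le
  calc (s:ℝ) ≤ ((a - r : ℝ≥0) : ℝ) := by exact_mod_cast hs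
    _ = (a:ℝ) - r := by rw [NNReal.coe_sub hra]

lemma corr_right {s : ℝ≥0} (hs : a + r ≤ s) : corr a b r s = s := by
  rw [← NNReal.coe_inj, corr_coe hc]
  exact tent_right (by exact_mod_cast hc.1) hc.2.2 (by exact_mod_cast hs)

lemma corr_dist (s : ℝ≥0) : dist (corr a b r s) s ≤ |(b:ℝ) - a| := by
  rw [NNReal.dist_eq, corr_coe hc]
  exact tent_dist (by exact_mod_cast hc.1) hc.2.2 _

lemma corr_window {s : ℝ≥0} (hs : s ∈ Icc (a - r) (a + r)) :
    corr a b r s ∈ Icc (a - r) (a + r) := by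
  constructor
  · calc a - r = corr a b r (a - r) := (corr_left hc le_rfl).symm
      _ ≤ corr a b r s := (corr_strictMono hc).monotone hs.1
  · calc corr a b r s ≤ corr a b r (a + r) := (corr_strictMono hc).monotone hs.2
      _ = a + r := corr_right hc le_rfl

end

lemma corr_id_of_not {a b r : ℝ≥0} (hc : ¬(0 < r ∧ r < a ∧ |(b : ℝ) - a| < r)) :
    corr a b r = id := by rw [corr, if_neg hc]


lemma tc_id : IsTimeChange id := ⟨strictMono_id, Function.bijective_id⟩

lemma tc_comp {l₁ l₂ : ℝ≥0 → ℝ≥0} (h₁ : IsTimeChange l₁) (h₂ : IsTimeChange l₂) :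
    IsTimeChange (l₁ ∘ l₂) := ⟨h₁.1.comp h₂.1, h₁.2.comp h₂.2⟩

lemma nebot_lt {x : ℝ≥0} (hx : 0 < x) : (𝓝[<] x).NeBot :=
  nhdsWithin_Iio_self_neBot' ⟨0, hx⟩

lemma tc_map_nhds_lt {l : ℝ≥0 → ℝ≥0} (h : IsTimeChange l) (x : ℝ≥0) :
    Filter.map l (𝓝[<] x) = 𝓝[<] (l x) := by
  let e : ℝ≥0 ≃o ℝ≥0 := StrictMono.orderIsoOfSurjective l h.1 h.2.2
  have hco : (e : ℝ≥0 → ℝ≥0) = l := StrictMono.coe_orderIsoOfSurjective l h.1 h.2.2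
  have := e.toHomeomorph.isEmbedding.map_nhdsWithin_eq (Iio x) x
  rw [OrderIso.coe_toHomeomorph] at this
  rw [hco] at this
  rw [this]
  congr 1
  have : e '' Iio x = Iio (e x) := OrderIso.image_Iio e x
  rw [hco] at this
  rw [this]

/-- Left limits exist for càdlàg paths, and `leftLim` computes them. -/
lemma cadlag_leftLim {V : Type*} [MetricSpace V] {f : ℝ≥0 → V} (hf : Cadlag f)
    {x : ℝ≥0} (hx : 0 < x) :
    Filter.Tendsto f (𝓝[<] x) (𝓝 (Function.leftLim f x)) := by
  obtain ⟨y, hy⟩ := hf.2 x hx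
  haveI := nebot_lt hx
  rwa [leftLim_eq_of_tendsto hy]

/-- Jump size of a composition with a time change. -/
lemma jumpSize_comp {V : Type*} [MetricSpace V] {f : ℝ≥0 → V} (hf : Cadlag f)
    {l : ℝ≥0 → ℝ≥0} (hl : IsTimeChange l) {x : ℝ≥0} (hx : 0 < x) (hlx : 0 < l x) :
    jumpSize (f ∘ l) x = jumpSize f (l x) := by
  have hmap := tc_map_nhds_lt hl x
  have hfl : Filter.Tendsto f (𝓝[<] (l x)) (𝓝 (Function.leftLim f (l x))) :=
    cadlag_leftLim hf hlx
  have hcomp : Filter.Tendsto (f ∘ l) (𝓝[<] x) (𝓝 (Function.leftLim f (l x))) := by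
    rw [Filter.tendsto_map'_iff.symm, hmap]; exact hfl
  haveI := nebot_lt hx
  have : Function.leftLim (f ∘ l) x = Function.leftLim f (l x) :=
    leftLim_eq_of_tendsto hcomp
  simp only [jumpSize, this, Function.comp_apply]

lemma tc_zero {l : ℝ≥0 → ℝ≥0} (h : IsTimeChange l) : l 0 = 0 := by
  obtain ⟨x, hx⟩ := h.2.2 0
  have h0 : l 0 ≤ l x := h.1.monotone zero_le
  rw [hx] at h0
  exact le_antisymm h0 (zero_le)

lemma tendsto_leftLim_comp {V : Type*} [MetricSpace V] {f : ℝ≥0 → V} (hf : Cadlag f)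
    {l : ℝ≥0 → ℝ≥0} (hl : IsTimeChange l) {x : ℝ≥0} (hx : 0 < x) (hlx : 0 < l x) :
    Filter.Tendsto (f ∘ l) (𝓝[<] x) (𝓝 (Function.leftLim (f ∘ l) x)) := by
  have hmap := tc_map_nhds_lt hl x
  have hfl : Filter.Tendsto f (𝓝[<] (l x)) (𝓝 (Function.leftLim f (l x))) :=
    cadlag_leftLim hf hlx
  have hcomp : Filter.Tendsto (f ∘ l) (𝓝[<] x) (𝓝 (Function.leftLim f (l x))) := by
    rw [Filter.tendsto_map'_iff.symm, hmap]; exact hfl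
  haveI := nebot_lt hx
  rwa [leftLim_eq_of_tendsto hcomp]

/-- A càdlàg path with zero jump is continuous at positive points. -/
lemma cont_of_jump_zero {V : Type*} [MetricSpace V] {F : ℝ≥0 → V} (hF : Cadlag F)
    {t0 : ℝ≥0} (ht0 : 0 < t0) (hj : jumpSize F t0 = 0) : ContinuousAt F t0 := by
  have hleft : Filter.Tendsto F (𝓝[<] t0) (𝓝 (F t0)) := by
    have := cadlag_leftLim hF ht0
    have heq : Function.leftLim F t0 = F t0 := by
      have := dist_eq_zero.1 hj
      exact this.symm
    rwa [heq] at this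
  have hright : Filter.Tendsto F (𝓝[≥] t0) (𝓝 (F t0)) := hF.1 t0
  rw [ContinuousAt, ← nhdsLT_sup_nhdsGE t0]
  exact hleft.sup hright

/-- Near `t0`, all other jumps of a càdlàg path are small. -/
lemma jump_isolated {V : Type*} [MetricSpace V] {F : ℝ≥0 → V} (hF : Cadlag F)
    {t0 : ℝ≥0} (ht0 : 0 < t0) {ε : ℝ} (hε : 0 < ε) :
    ∃ δ : ℝ≥0, 0 < δ ∧ ∀ s : ℝ≥0, 0 < s → s ≠ t0 → dist s t0 < (δ:ℝ) →
      jumpSize F s ≤ 2 * ε := by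
  -- right side
  have hright : Filter.Tendsto F (𝓝[≥] t0) (𝓝 (F t0)) := hF.1 t0
  have h1 : {u : ℝ≥0 | dist (F u) (F t0) ≤ ε} ∈ 𝓝[≥] t0 :=
    hright (Metric.closedBall_mem_nhds _ hε)
  obtain ⟨δ₁, hδ₁, hsub₁⟩ := Metric.mem_nhdsWithin_iff.1 h1
  have hball₁ : ∀ u : ℝ≥0, dist u t0 < δ₁ → t0 ≤ u → dist (F u) (F t0) ≤ ε :=
    fun u h h' => hsub₁ ⟨Metric.mem_ball.2 h, h'⟩
  -- left side
  have hleft : Filter.Tendsto F (𝓝[<] t0) (𝓝 (Function.leftLim F t0)) :=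
    cadlag_leftLim hF ht0
  have h2 : {u : ℝ≥0 | dist (F u) (Function.leftLim F t0) ≤ ε} ∈ 𝓝[<] t0 :=
    hleft (Metric.closedBall_mem_nhds _ hε)
  obtain ⟨δ₂, hδ₂, hsub₂⟩ := Metric.mem_nhdsWithin_iff.1 h2
  have hball₂ : ∀ u : ℝ≥0, dist u t0 < δ₂ → u < t0 →
      dist (F u) (Function.leftLim F t0) ≤ ε :=
    fun u h h' => hsub₂ ⟨Metric.mem_ball.2 h, h'⟩
  set δr : ℝ := min δ₁ δ₂
  have hδr : 0 < δr := lt_min hδ₁ hδ₂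
  refine ⟨⟨δr, hδr.le⟩, by exact_mod_cast hδr, ?_⟩
  intro s hs hne hdist
  change dist s t0 < δr at hdist
  rcases lt_or_gt_of_ne hne with hlt | hgt
  · -- s < t0 : both F s and leftLim F s within ε of leftLim F t0
    have hsball : dist s t0 < δ₂ := lt_of_lt_of_le hdist (min_le_right _ _)
    have hFs : dist (F s) (Function.leftLim F t0) ≤ ε := hball₂ s hsball hlt
    have hLs : dist (Function.leftLim F s) (Function.leftLim F t0) ≤ ε := by
      haveI := nebot_lt hs
      refine le_of_tendsto (((cadlag_leftLim hF hs).dist tendsto_const_nhds)) ?_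
      have hball : Metric.ball t0 δ₂ ∈ 𝓝[<] s :=
        nhdsWithin_le_nhds (Metric.isOpen_ball.mem_nhds (by rwa [Metric.mem_ball]))
      filter_upwards [hball, self_mem_nhdsWithin] with u hu hus
      exact hball₂ u (by rwa [Metric.mem_ball] at hu) (lt_trans hus hlt)
    calc jumpSize F s ≤ dist (F s) (Function.leftLim F t0)
          + dist (Function.leftLim F t0) (Function.leftLim F s) := dist_triangle _ _ _
      _ ≤ ε + ε := add_le_add hFs (by rwa [dist_comm] at hLs)
      _ = 2 * ε := by ring
  · -- s > t0
    have hsball : dist s t0 < δ₁ := lt_of_lt_of_le hdist (min_le_left _ _)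
    have hFs : dist (F s) (F t0) ≤ ε := hball₁ s hsball hgt.le
    have hLs : dist (Function.leftLim F s) (F t0) ≤ ε := by
      haveI := nebot_lt hs
      refine le_of_tendsto (((cadlag_leftLim hF hs).dist tendsto_const_nhds)) ?_
      filter_upwards [Ioo_mem_nhdsLT hgt] with u hu
      refine hball₁ u ?_ (le_of_lt hu.1)
      have h3 : dist u t0 < dist s t0 := by
        rw [NNReal.dist_eq, NNReal.dist_eq,
          abs_of_pos (by exact_mod_cast sub_pos.2 (show (t0:ℝ) < u by exact_mod_cast hu.1)),
          abs_of_pos (by exact_mod_cast sub_pos.2 (show (t0:ℝ) < s by exact_mod_cast hgt))]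
        have : (u:ℝ) < s := by exact_mod_cast hu.2
        linarith
      exact lt_of_lt_of_le (lt_trans h3 hsball) le_rfl
    calc jumpSize F s ≤ dist (F s) (F t0) + dist (F t0) (Function.leftLim F s) :=
          dist_triangle _ _ _
      _ ≤ ε + ε := add_le_add hFs (by rwa [dist_comm] at hLs)
      _ = 2 * ε := by ring


lemma edist_tsub_le (a b c d : ℝ≥0) : edist (a - c) (b - d) ≤ edist a b + edist c d := by
  rw [edist_nndist, edist_nndist, edist_nndist, ← ENNReal.coe_add, ENNReal.coe_le_coe,
    ← NNReal.coe_le_coe]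
  push_cast [← dist_nndist]
  rw [NNReal.dist_eq, NNReal.dist_eq, NNReal.dist_eq]
  have e1 : ((a - c : ℝ≥0) : ℝ) = max ((a:ℝ) - c) 0 := by
    rw [NNReal.sub_def, Real.coe_toNNReal']
  have e2 : ((b - d : ℝ≥0) : ℝ) = max ((b:ℝ) - d) 0 := by
    rw [NNReal.sub_def, Real.coe_toNNReal']
  rw [e1, e2]
  have := abs_max_sub_max_le_abs ((a:ℝ) - c) ((b:ℝ) - d) 0
  calc |max ((a:ℝ) - c) 0 - max ((b:ℝ) - d) 0| ≤ |((a:ℝ) - c) - ((b:ℝ) - d)| := this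
    _ = |((a:ℝ) - b) - ((c:ℝ) - d)| := by ring_nf
    _ ≤ |(a:ℝ) - b| + |(c:ℝ) - d| := abs_sub _ _

lemma dist_of_mem_window {u a r : ℝ≥0} (hu : u ∈ Icc (a - r) (a + r)) :
    dist u a ≤ (r : ℝ) := by
  rw [NNReal.dist_eq, abs_le]
  constructor
  · rcases le_total r a with h | h
    · have h1 : ((a - r : ℝ≥0) : ℝ) = (a:ℝ) - r := NNReal.coe_sub h
      have h2 : ((a - r : ℝ≥0) : ℝ) ≤ u := by exact_mod_cast hu.1
      linarith
    · have h2 : (a:ℝ) ≤ r := by exact_mod_cast h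
      linarith [NNReal.coe_nonneg u]
  · have : (u:ℝ) ≤ (a:ℝ) + r := by exact_mod_cast hu.2
    linarith

lemma not_mem_window {u a r : ℝ≥0} (hu : u ∉ Icc (a - r) (a + r)) :
    u ≤ a - r ∨ a + r ≤ u := by
  rw [mem_Icc, not_and_or] at hu
  rcases hu with h | h
  · exact Or.inl (le_of_not_ge h)
  · exact Or.inr (le_of_not_ge h)


end ShiftPf
end

/-- continuity of the shift operator. -/
theorem statement2 {V : Type*} [MetricSpace V] [PolishSpace V]
    (f : ℕ → ℝ≥0 → V) (F : ℝ≥0 → V) (t : ℕ → ℝ≥0) (t0 : ℝ≥0)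
    (hfc : ∀ n, Cadlag (f n)) (hFc : Cadlag F)
    (ht0 : 0 < t0) (ht : Filter.Tendsto t Filter.atTop (nhds t0))
    (hfF : J1Tendsto Filter.atTop f F)
    (hjump : Filter.Tendsto (fun n => jumpSize (f n) (t n)) Filter.atTop
      (nhds (jumpSize F t0))) :
    J1Tendsto Filter.atTop (fun n => shiftMap (t n) (f n)) (shiftMap t0 F) := by
  classical
  open ShiftPf in
  obtain ⟨l, hltc, hlsup, M, hMub, hMconv⟩ := hfF
  -- inverse time of `t n` under the time change `l n`
  set c : ℕ → ℝ≥0 := fun n => Function.invFun (l n) (t n) with hc_def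
  have hlc : ∀ n, l n (c n) = t n := fun n => Function.invFun_eq ((hltc n).2.2 (t n))
  set r : ℕ → ℝ≥0 := fun n => 2 * nndist (c n) t0 with hr_def
  set h : ℕ → ℝ≥0 → ℝ≥0 := fun n => ShiftPf.corr t0 (c n) (r n) with hh_def
  set μ : ℕ → ℝ≥0 → ℝ≥0 := fun n => l n ∘ h n with hμ_def
  set cnd : ℕ → Prop := fun n =>
    0 < r n ∧ r n < t0 ∧ |((c n : ℝ)) - (t0 : ℝ)| < (r n : ℝ)
  have htc_h : ∀ n, IsTimeChange (h n) := by
    intro n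
    by_cases hcn : cnd n
    · exact ⟨ShiftPf.corr_strictMono hcn,
        (ShiftPf.corr_strictMono hcn).injective, ShiftPf.corr_surjective hcn⟩
    · rw [hh_def]; simp only
      rw [ShiftPf.corr_id_of_not hcn]
      exact ShiftPf.tc_id
  have htc_μ : ∀ n, IsTimeChange (μ n) := fun n => ShiftPf.tc_comp (hltc n) (htc_h n)
  have h_dist : ∀ n s, dist (h n s) s ≤ (nndist (c n) t0 : ℝ) := by
    intro n s
    by_cases hcn : cnd n
    · have := ShiftPf.corr_dist hcn s
      rwa [show |((c n : ℝ)) - (t0 : ℝ)| = (nndist (c n) t0 : ℝ) by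
        rw [← NNReal.dist_eq, dist_nndist]] at this
    · rw [hh_def]; simp only
      rw [ShiftPf.corr_id_of_not hcn]
      simpa using dist_nonneg
  have hμ_good : ∀ n, r n < t0 → μ n t0 = t n := by
    intro n hrn
    by_cases hr0 : r n = 0
    · have hc0 : c n = t0 := by
        have : nndist (c n) t0 = 0 := by
          have : (2 : ℝ≥0) * nndist (c n) t0 = 0 := hr0
          simpa using this
        exact eq_of_nndist_eq_zero this
      have hcn : ¬ cnd n := fun hc => absurd hr0 hc.1.ne'
      rw [hμ_def]; simp only [Function.comp_apply]
      rw [hh_def]; simp only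
      rw [ShiftPf.corr_id_of_not hcn]
      simp [← hc0, hlc n]
    · have hrpos : 0 < r n := pos_iff_ne_zero.2 hr0
      have hnd : 0 < nndist (c n) t0 := by
        by_contra hh'
        push_neg at hh'
        exact hr0 (by rw [hr_def]; simp [le_zero_iff.1 hh'])
      have hcn : cnd n := by
        refine ⟨hrpos, hrn, ?_⟩
        rw [show |((c n : ℝ)) - (t0 : ℝ)| = (nndist (c n) t0 : ℝ) by
          rw [← NNReal.dist_eq, dist_nndist]]
        rw [hr_def]
        push_cast
        have hpos : (0:ℝ) < dist (c n) t0 := by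
          rw [dist_nndist]; exact_mod_cast hnd
        rw [dist_nndist] at hpos ⊢
        linarith
      rw [hμ_def]; simp only [Function.comp_apply]
      rw [hh_def]; simp only
      rw [ShiftPf.corr_apex hcn]
      exact hlc n
  -- the final time changes
  set L : ℕ → ℝ≥0 → ℝ≥0 :=
    fun n => if r n < t0 then (fun s => μ n (t0 + s) - t n) else id with hL_def
  -- quantitative controls
  set E : ℕ → ℝ≥0∞ := fun n => ⨆ s, edist (l n s) s with hE_def
  have hE0 : Filter.Tendsto E Filter.atTop (nhds 0) := hlsup
  have hEs : ∀ n s, edist (l n s) s ≤ E n := fun n s => le_iSup (fun s => edist (l n s) s) s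
  have htE : Filter.Tendsto (fun n => edist (t n) t0) Filter.atTop (nhds 0) := by
    have := ht.edist (tendsto_const_nhds (x := t0))
    simpa using this
  have hcE : Filter.Tendsto (fun n => edist (c n) t0) Filter.atTop (nhds 0) := by
    have hb : ∀ n, edist (c n) t0 ≤ E n + edist (t n) t0 := by
      intro n
      refine le_trans (edist_triangle _ (t n) _) (add_le_add_left ?_ _)
      have h1 : edist (c n) (t n) = edist (l n (c n)) (c n) := by
        rw [hlc n, edist_comm]
      rw [h1]
      exact hEs n (c n)
    have hsum : Filter.Tendsto (fun n => E n + edist (t n) t0) Filter.atTop (nhds 0) := by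
      have := hE0.add htE
      simpa using this
    exact tendsto_of_tendsto_of_tendsto_of_le_of_le tendsto_const_nhds hsum
      (fun n => zero_le) hb
  have hct0 : Filter.Tendsto c Filter.atTop (nhds t0) :=
    tendsto_iff_edist_tendsto_0.2 hcE
  have hr0' : Filter.Tendsto r Filter.atTop (nhds 0) := by
    have h1 : Filter.Tendsto (fun n => nndist (c n) t0) Filter.atTop (nhds 0) := by
      have := hct0.nndist (tendsto_const_nhds (x := t0))
      simpa using this
    have := (tendsto_const_nhds (x := (2:ℝ≥0))).mul h1
    rw [hr_def]
    simpa using this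
  have hgood : ∀ᶠ n in Filter.atTop, r n < t0 := hr0'.eventually_lt_const ht0
  -- window oscillation of F
  set W : ℕ → ℝ≥0∞ :=
    fun n => ⨆ u : Set.Icc (t0 - r n) (t0 + r n), edist (F (u : ℝ≥0)) (F t0) with hW_def
  have hW : Filter.Tendsto W Filter.atTop (nhds 0) := by
    by_cases hj0 : jumpSize F t0 = 0
    · -- continuous case
      have hcont : ContinuousAt F t0 := ShiftPf.cont_of_jump_zero hFc ht0 hj0
      refine ENNReal.tendsto_nhds_zero.2 fun ε hε => ?_
      obtain ⟨ε', hε', hε'le⟩ : ∃ ε' : ℝ≥0, 0 < ε' ∧ (ε' : ℝ≥0∞) ≤ ε := by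
        rcases eq_or_ne ε ⊤ with rfl | hne
        · exact ⟨1, one_pos, le_top⟩
        · exact ⟨ε.toNNReal, ENNReal.toNNReal_pos (ne_of_gt hε) hne,
            (ENNReal.coe_toNNReal hne).le⟩
      obtain ⟨δ, hδ, hball⟩ := Metric.continuousAt_iff.1 hcont (ε' : ℝ)
        (by exact_mod_cast hε')
      have hrδ : ∀ᶠ n in Filter.atTop, (r n : ℝ) < δ :=
        (NNReal.tendsto_coe.2 hr0').eventually_lt_const hδ
      filter_upwards [hrδ] with n hn
      refine iSup_le fun u => ?_
      have hd : dist (u : ℝ≥0) t0 ≤ (r n : ℝ) := ShiftPf.dist_of_mem_window u.2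
      have hdF : dist (F (u:ℝ≥0)) (F t0) ≤ (ε' : ℝ) := (hball (lt_of_le_of_lt hd hn)).le
      refine le_trans ?_ hε'le
      rw [edist_nndist, ENNReal.coe_le_coe, ← NNReal.coe_le_coe, ← dist_nndist]
      exact hdF
    · -- jump case : eventually `c n = t0`
      have hapos : 0 < jumpSize F t0 :=
        lt_of_le_of_ne dist_nonneg (Ne.symm hj0)
      set a : ℝ := jumpSize F t0 with ha_def
      obtain ⟨δ, hδpos, hiso⟩ := ShiftPf.jump_isolated hFc ht0
        (show (0:ℝ) < a/8 by linarith)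
      obtain ⟨m, hmM, hmle⟩ := hMub (t0 + 1)
      have hDm := hMconv m hmM
      set εn : ℝ≥0 := Real.toNNReal (a/8) with hεn_def
      have hεpos : (0:ℝ) < a/8 := by linarith
      have hεreal : (εn : ℝ) = a/8 := Real.coe_toNNReal _ hεpos.le
      have hev1 : ∀ᶠ n in Filter.atTop,
          (⨆ s : Set.Icc (0:ℝ≥0) m, edist (f n (l n (s:ℝ≥0))) (F (s:ℝ≥0))) ≤ (εn : ℝ≥0∞) :=
        ENNReal.tendsto_nhds_zero.1 hDm εn
          (by exact_mod_cast Real.toNNReal_pos.2 hεpos)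
      have hev2 : ∀ᶠ n in Filter.atTop, dist (c n) t0 < (δ : ℝ) := by
        have h1 : Filter.Tendsto (fun n => dist (c n) t0) Filter.atTop (nhds 0) := by
          have := hct0.dist (tendsto_const_nhds (x := t0))
          simpa using this
        exact h1.eventually_lt_const (by exact_mod_cast hδpos)
      have hev4 : ∀ᶠ n in Filter.atTop, c n ≤ m :=
        (hct0.eventually_lt_const (lt_of_lt_of_le (lt_add_one t0) hmle)).mono
          fun n hn => hn.le
      have hev5 : ∀ᶠ n in Filter.atTop, |jumpSize (f n) (t n) - a| < a/8 := by
        have := Metric.tendsto_nhds.1 hjump (a/8) hεpos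
        exact this.mono fun n hn => by rwa [Real.dist_eq] at hn
      have hev6 : ∀ᶠ n in Filter.atTop, 0 < t n := ht.eventually (eventually_gt_nhds ht0)
      have hc_eq : ∀ᶠ n in Filter.atTop, c n = t0 := by
        filter_upwards [hev1, hev2, hev4, hev5, hev6] with n h1 h2 h4 h5 h6
        by_contra hne
        have hcnpos : 0 < c n := by
          by_contra hc0
          push_neg at hc0
          have hc0' : c n = 0 := le_antisymm hc0 (zero_le)
          have : t n = 0 := by rw [← hlc n, hc0', ShiftPf.tc_zero (hltc n)]
          exact absurd this h6.ne'
        have hjc : jumpSize (f n ∘ l n) (c n) = jumpSize (f n) (t n) := by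
          have := ShiftPf.jumpSize_comp (hfc n) (hltc n) hcnpos
            (by rw [hlc n]; exact h6)
          rwa [hlc n] at this
        have hpt : ∀ v : ℝ≥0, v ≤ m → dist (f n (l n v)) (F v) ≤ (εn : ℝ) := by
          intro v hv
          have h1' : edist (f n (l n v)) (F v) ≤ (εn : ℝ≥0∞) :=
            le_trans (le_iSup_of_le ⟨v, zero_le, hv⟩ le_rfl) h1
          rw [edist_nndist, ENNReal.coe_le_coe, ← NNReal.coe_le_coe, ← dist_nndist] at h1'
          exact h1'
        have hd1 : dist (f n (l n (c n))) (F (c n)) ≤ (εn : ℝ) := hpt (c n) h4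
        have hGlim := ShiftPf.tendsto_leftLim_comp (hfc n) (hltc n) hcnpos
          (by rw [hlc n]; exact h6)
        have hFlim := ShiftPf.cadlag_leftLim hFc hcnpos
        have hd2 : dist (Function.leftLim (f n ∘ l n) (c n))
            (Function.leftLim F (c n)) ≤ (εn : ℝ) := by
          haveI := ShiftPf.nebot_lt hcnpos
          refine le_of_tendsto (hGlim.dist hFlim) ?_
          filter_upwards [self_mem_nhdsWithin] with v hv
          exact hpt v (le_trans (le_of_lt hv) h4)
        have hcomp : |jumpSize (f n ∘ l n) (c n) - jumpSize F (c n)| ≤ (εn:ℝ) + εn := by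
          have := dist_dist_dist_le (f n (l n (c n))) (Function.leftLim (f n ∘ l n) (c n))
            (F (c n)) (Function.leftLim F (c n))
          rw [Real.dist_eq] at this
          refine le_trans ?_ (le_trans this (add_le_add hd1 hd2))
          simp only [jumpSize, Function.comp_apply]
          exact le_rfl
        have hlarge : 2 * (a/8) < jumpSize F (c n) := by
          have hj1 : a - a/8 ≤ jumpSize (f n) (t n) := by
            have := abs_lt.1 h5
            linarith [this.1]
          have hj2 := abs_le.1 hcomp
          rw [hjc] at hj2
          rw [hεreal] at hj2
          linarith [hj2.1]
        exact absurd (hiso (c n) hcnpos hne h2) (not_le.2 hlarge)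
      have hWeq : ∀ᶠ n in Filter.atTop, W n = 0 := by
        filter_upwards [hc_eq] with n hcn
        have hrz : r n = 0 := by rw [hr_def]; simp [hcn]
        rw [hW_def]
        refine le_antisymm (iSup_le fun u => ?_) (zero_le)
        obtain ⟨u, hu1, hu2⟩ := u
        rw [hrz, tsub_zero] at hu1
        rw [hrz, add_zero] at hu2
        have hu : u = t0 := le_antisymm hu2 hu1
        simp only
        rw [hu, edist_self]
      exact tendsto_const_nhds.congr' (hWeq.mono fun n hn => hn.symm)
  -- time-change property of L
  have hLtc : ∀ n, IsTimeChange (L n) := by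
    intro n
    rw [hL_def]; simp only
    split_ifs with hrn
    · have hgd := hμ_good n hrn
      have hmono := (htc_μ n).1
      have hmin : ∀ s, t n ≤ μ n (t0 + s) := by
        intro s
        rw [← hgd]
        exact hmono.monotone le_self_add
      have hφ : StrictMono (fun s => μ n (t0 + s) - t n) := fun x y hxy =>
        tsub_lt_tsub_right_of_le (hmin x) (hmono (add_lt_add_right hxy t0))
      refine ⟨hφ, hφ.injective, ?_⟩
      intro y
      obtain ⟨u, hu⟩ := (htc_μ n).2.2 (t n + y)
      have hut0 : t0 ≤ u := by
        refine hmono.le_iff_le.1 ?_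
        rw [hgd, hu]
        exact le_self_add
      exact ⟨u - t0, by
        simp only
        rw [add_tsub_cancel_of_le hut0, hu, add_tsub_cancel_left]⟩
    · exact ShiftPf.tc_id
  -- sup-distance of L to the identity tends to 0
  have hμ_id : ∀ n u, edist (μ n u) u ≤ E n + (nndist (c n) t0 : ℝ≥0∞) := by
    intro n u
    refine le_trans (edist_triangle _ (h n u) _) (add_le_add (hEs n _) ?_)
    rw [edist_nndist, ENNReal.coe_le_coe, ← NNReal.coe_le_coe, ← dist_nndist]
    exact h_dist n u
  have hLb : ∀ n, r n < t0 → ∀ s,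
      edist (L n s) s ≤ E n + (nndist (c n) t0 : ℝ≥0∞) + edist (t n) t0 := by
    intro n hrn s
    have hL : L n s = μ n (t0 + s) - t n := by rw [hL_def]; simp [hrn]
    calc edist (L n s) s = edist (μ n (t0 + s) - t n) ((t0 + s) - t0) := by
          rw [hL, add_tsub_cancel_left]
      _ ≤ edist (μ n (t0 + s)) (t0 + s) + edist (t n) t0 := ShiftPf.edist_tsub_le _ _ _ _
      _ ≤ E n + (nndist (c n) t0 : ℝ≥0∞) + edist (t n) t0 :=
          add_le_add_left (hμ_id n _) _
  have hLsup : Filter.Tendsto (fun n => ⨆ s : ℝ≥0, edist (L n s) s)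
      Filter.atTop (nhds 0) := by
    have h1 : Filter.Tendsto (fun n => ((nndist (c n) t0 : ℝ≥0) : ℝ≥0∞))
        Filter.atTop (nhds 0) := by
      rw [← ENNReal.coe_zero]
      refine ENNReal.tendsto_coe.2 ?_
      have := hct0.nndist (tendsto_const_nhds (x := t0))
      simpa using this
    have hB : Filter.Tendsto
        (fun n => E n + (nndist (c n) t0 : ℝ≥0∞) + edist (t n) t0)
        Filter.atTop (nhds 0) := by
      have := (hE0.add h1).add htE
      simpa using this
    refine tendsto_of_tendsto_of_tendsto_of_le_of_le' tendsto_const_nhds hB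
      (Filter.Eventually.of_forall fun n => zero_le) ?_
    filter_upwards [hgood] with n hrn
    exact iSup_le (hLb n hrn)
  refine ⟨L, hLtc, hLsup, {m'' | ∃ m ∈ M, t0 + m'' + 1 ≤ m}, ?_, ?_⟩
  · intro ρ
    obtain ⟨m, hm, hle⟩ := hMub (t0 + ρ + 1)
    exact ⟨ρ, ⟨m, hm, hle⟩, le_rfl⟩
  · rintro m'' ⟨m, hmM, hm⟩
    simp only [shiftMap]
    have hDm := hMconv m hmM
    have hr1 : ∀ᶠ n in Filter.atTop, r n ≤ 1 :=
      (hr0'.eventually_lt_const one_pos).mono fun _ h' => h'.le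
    have hnd_r : ∀ n, nndist (c n) t0 ≤ r n := by
      intro n
      rw [hr_def]
      exact le_mul_of_one_le_left (zero_le) one_le_two
    have hub : ∀ᶠ n in Filter.atTop,
        (⨆ s : Set.Icc (0:ℝ≥0) m'', edist (f n (t n + L n (s:ℝ≥0))) (F (t0 + (s:ℝ≥0))))
          ≤ (⨆ s : Set.Icc (0:ℝ≥0) m, edist (f n (l n (s:ℝ≥0))) (F (s:ℝ≥0)))
            + (W n + W n) := by
      filter_upwards [hgood, hr1] with n hrn hr1n
      refine iSup_le fun s => ?_
      set u : ℝ≥0 := t0 + (s : ℝ≥0) with hu_def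
      have hgd := hμ_good n hrn
      have hL : L n (s:ℝ≥0) = μ n u - t n := by rw [hL_def]; simp [hrn]; rfl
      have htle : t n ≤ μ n u := by
        rw [← hgd]
        exact (htc_μ n).1.monotone le_self_add
      have harg : t n + L n (s:ℝ≥0) = μ n u := by
        rw [hL, add_tsub_cancel_of_le htle]
      rw [harg]
      have hμu : μ n u = l n (h n u) := rfl
      have hhu_le : h n u ≤ m := by
        have h2 := h_dist n u
        have h3 : (h n u : ℝ) - u ≤ dist (h n u) u := by
          rw [NNReal.dist_eq]
          exact le_abs_self _
        have hs_le : ((s:ℝ≥0) : ℝ) ≤ (m'' : ℝ) := by exact_mod_cast s.2.2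
        have hnd1 : (nndist (c n) t0 : ℝ) ≤ 1 := by
          exact_mod_cast le_trans (hnd_r n) hr1n
        have hmr : (t0 : ℝ) + m'' + 1 ≤ m := by exact_mod_cast hm
        have hur : (u : ℝ) = (t0 : ℝ) + (s:ℝ≥0) := by
          rw [hu_def]; push_cast; ring
        have : (h n u : ℝ) ≤ (m : ℝ) := by linarith
        exact_mod_cast this
      have hwindow : edist (F (h n u)) (F u) ≤ W n + W n := by
        by_cases hu : u ∈ Set.Icc (t0 - r n) (t0 + r n)
        · by_cases hcn : cnd n
          · have h1 : h n u ∈ Set.Icc (t0 - r n) (t0 + r n) :=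
              ShiftPf.corr_window hcn hu
            calc edist (F (h n u)) (F u)
                ≤ edist (F (h n u)) (F t0) + edist (F t0) (F u) := edist_triangle _ _ _
              _ ≤ W n + W n := by
                  refine add_le_add (le_iSup_of_le ⟨h n u, h1⟩ le_rfl) ?_
                  rw [edist_comm]
                  exact le_iSup_of_le ⟨u, hu⟩ le_rfl
          · have : h n u = u := by
              rw [hh_def]; simp only
              rw [ShiftPf.corr_id_of_not hcn]; rfl
            rw [this]
            simp
        · rcases ShiftPf.not_mem_window hu with hle | hge
          · have : h n u = u := by
              by_cases hcn : cnd n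
              · exact ShiftPf.corr_left hcn hle
              · rw [hh_def]; simp only
                rw [ShiftPf.corr_id_of_not hcn]; rfl
            rw [this]; simp
          · have : h n u = u := by
              by_cases hcn : cnd n
              · exact ShiftPf.corr_right hcn hge
              · rw [hh_def]; simp only
                rw [ShiftPf.corr_id_of_not hcn]; rfl
            rw [this]; simp
      calc edist (f n (μ n u)) (F u)
          ≤ edist (f n (l n (h n u))) (F (h n u)) + edist (F (h n u)) (F u) := by
            rw [hμu]
            exact edist_triangle _ _ _
        _ ≤ (⨆ s : Set.Icc (0:ℝ≥0) m, edist (f n (l n (s:ℝ≥0))) (F (s:ℝ≥0)))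
              + (W n + W n) :=
            add_le_add (le_iSup_of_le ⟨h n u, ⟨zero_le, hhu_le⟩⟩ le_rfl) hwindow
    have hRHS : Filter.Tendsto
        (fun n => (⨆ s : Set.Icc (0:ℝ≥0) m, edist (f n (l n (s:ℝ≥0))) (F (s:ℝ≥0)))
          + (W n + W n)) Filter.atTop (nhds 0) := by
      have := hDm.add (hW.add hW)
      simpa using this
    exact tendsto_of_tendsto_of_tendsto_of_le_of_le' tendsto_const_nhds hRHS
      (Filter.Eventually.of_forall fun n => zero_le) hub
end

section
/- For any càdlàg function f : [0,∞) → V and any m, δ > 0, there are only finitely many excursion intervals of f starting before m on which the supremum of the distance to a is at least δ. Consequently, if Φ_ε denotes the operator that replaces by the constant a all excursions e of f with φ(e) ≤ ε (where φ : E → [0,∞] satisfies φ(e) > 0 iff e ≠ the trivial excursion), then sup_{[0,m]} v(Φ_ε(f)(t), f(t)) → 0 as ε → 0, and hence Φ_ε(f) → f in the J1 topology as ε → 0. -/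
open scoped NNReal ENNReal Topology
open Filter Set

noncomputable section

/-- Left endpoint of the excursion interval of `f` (away from `a`) straddling `t`. -/
def gLeft {V : Type*} [PseudoMetricSpace V] (a : V) (f : ℝ≥0 → V) (t : ℝ≥0) : ℝ≥0 :=
  sSup {s : ℝ≥0 | s ≤ t ∧ f s = a}

/-- Right endpoint (in `[0,∞]`) of the excursion interval of `f` straddling `t`. -/
def dRight {V : Type*} [PseudoMetricSpace V] (a : V) (f : ℝ≥0 → V) (t : ℝ≥0) : ℝ≥0∞ :=
  sInf ((fun s : ℝ≥0 => (s : ℝ≥0∞)) '' {s : ℝ≥0 | t < s ∧ f s = a})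

open Classical in
/-- The excursion of `f` straddling `t`: the path shifted to the left endpoint
of the straddling excursion interval and stopped at the right endpoint. -/
def excAt {V : Type*} [PseudoMetricSpace V] (a : V) (f : ℝ≥0 → V) (t : ℝ≥0) :
    ℝ≥0 → V :=
  fun s => if ((gLeft a f t + s : ℝ≥0) : ℝ≥0∞) < dRight a f t then f (gLeft a f t + s) else a

end

noncomputable section
open Classical in
/-- The truncation `Φ_ε` replacing every `ε`-small excursion of `f` by `a`:
`Φ_ε(f)(t) = f t` if the excursion straddling `t` has size `> ε`, else `a`. -/
def PhiTrunc {V : Type*} [PseudoMetricSpace V] (a : V)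
    (φ : (ℝ≥0 → V) → ℝ≥0∞) (ε : ℝ≥0) (f : ℝ≥0 → V) : ℝ≥0 → V :=
  fun t => if (ε : ℝ≥0∞) < φ (excAt a f t) then f t else a
end

section Aux
variable {V : Type*} [MetricSpace V] {a : V} {f : ℝ≥0 → V}

private lemma lim_eq_a {F : Filter ℝ≥0} [F.NeBot] {l : V} (h : Filter.Tendsto f F (nhds l))
    (hZ : ∀ᶠ s in F, f s = a) : l = a :=
  tendsto_nhds_unique (Filter.Tendsto.congr' (hZ.mono fun _ hs => hs) h) tendsto_const_nhds

private lemma lim_ge {F : Filter ℝ≥0} [F.NeBot] {l : V} {δ : ℝ≥0∞}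
    (h : Filter.Tendsto f F (nhds l)) (hW : ∀ᶠ s in F, δ ≤ edist (f s) a) :
    δ ≤ edist l a :=
  ge_of_tendsto (h.edist tendsto_const_nhds) hW

private lemma eq_a_of_inf {h : ℝ≥0 → V} {r : ℝ≥0} (hc : ContinuousWithinAt h (Set.Ici r) r)
    {A : Set ℝ≥0} (hA : ∀ s ∈ A, h s = a ∧ r < s)
    (hinf : sInf ((fun s : ℝ≥0 => (s : ℝ≥0∞)) '' A) ≤ (r : ℝ≥0∞)) : h r = a := by
  have hz : ∀ U ∈ 𝓝[>] r, (U ∩ {z | h z = a}).Nonempty := by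
    intro U hU
    obtain ⟨w, hw, hsub⟩ := (nhdsGT_basis r).mem_iff.mp hU
    have hlt : sInf ((fun s : ℝ≥0 => (s : ℝ≥0∞)) '' A) < (w : ℝ≥0∞) :=
      lt_of_le_of_lt hinf (by exact_mod_cast hw)
    obtain ⟨b, ⟨s, hsA, rfl⟩, hbw⟩ := sInf_lt_iff.mp hlt
    exact ⟨s, hsub ⟨(hA s hsA).2, by exact_mod_cast (show (s:ℝ≥0∞) < (w:ℝ≥0∞) from hbw)⟩,
      (hA s hsA).1⟩
  haveI : (𝓝[>] r ⊓ 𝓟 {z | h z = a}).NeBot := Filter.inf_principal_neBot_iff.mpr hz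
  have hlim : Filter.Tendsto h (𝓝[>] r ⊓ 𝓟 {z | h z = a}) (nhds (h r)) :=
    hc.mono_left (le_trans inf_le_left (nhdsWithin_mono r Set.Ioi_subset_Ici_self))
  exact lim_eq_a hlim (Filter.eventually_inf_principal.mpr (Filter.Eventually.of_forall fun z hz => hz))

private lemma gLeft_le (t : ℝ≥0) : gLeft a f t ≤ t :=
  csSup_le' fun _ hz => hz.1

private lemma lt_dRight (hf : Cadlag f) {t : ℝ≥0} (ht : f t ≠ a) :
    (t : ℝ≥0∞) < dRight a f t := by
  rcases lt_or_ge (t : ℝ≥0∞) (dRight a f t) with h | h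
  · exact h
  · rw [dRight] at h
    exact absurd (eq_a_of_inf (hf.1 t) (fun s hs => ⟨hs.2, hs.1⟩) h) ht

private lemma gLeft_eq {t u : ℝ≥0} (h1 : gLeft a f t ≤ u) (h2 : (u : ℝ≥0∞) < dRight a f t) :
    gLeft a f u = gLeft a f t := by
  have hset : {z : ℝ≥0 | z ≤ u ∧ f z = a} = {z : ℝ≥0 | z ≤ t ∧ f z = a} := by
    ext z
    constructor
    · rintro ⟨hzu, hz⟩
      refine ⟨?_, hz⟩
      by_contra hzt
      push_neg at hzt
      have hd : dRight a f t ≤ (z : ℝ≥0∞) := sInf_le ⟨z, ⟨hzt, hz⟩, rfl⟩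
      exact absurd h2 (not_lt.mpr (le_trans hd (ENNReal.coe_le_coe.mpr hzu)))
    · rintro ⟨hzt, hz⟩
      have hzg : z ≤ gLeft a f t := le_csSup ⟨t, fun w hw => hw.1⟩ ⟨hzt, hz⟩
      exact ⟨le_trans hzg h1, hz⟩
  simp only [gLeft]
  rw [hset]

private lemma dRight_eq {t t' : ℝ≥0} (hg : gLeft a f t = gLeft a f t') :
    dRight a f t = dRight a f t' := by
  have key : ∀ t₁ t₂ : ℝ≥0, t₁ ≤ t₂ → gLeft a f t₁ = gLeft a f t₂ →
      {s : ℝ≥0 | t₁ < s ∧ f s = a} = {s : ℝ≥0 | t₂ < s ∧ f s = a} := by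
    intro t₁ t₂ h12 hg'
    ext z
    constructor
    · rintro ⟨hz1, hz⟩
      refine ⟨?_, hz⟩
      by_contra h
      push_neg at h
      have hzg : z ≤ gLeft a f t₂ := le_csSup ⟨t₂, fun w hw => hw.1⟩ ⟨h, hz⟩
      rw [← hg'] at hzg
      exact absurd hz1 (not_lt.mpr (le_trans hzg (gLeft_le t₁)))
    · rintro ⟨hz2, hz⟩
      exact ⟨lt_of_le_of_lt h12 hz2, hz⟩
  rcases le_total t t' with h | h
  · rw [dRight, dRight, key t t' h hg]
  · rw [dRight, dRight, key t' t h hg.symm]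

private lemma excAt_eq {t t' : ℝ≥0} (hg : gLeft a f t = gLeft a f t') :
    excAt a f t = excAt a f t' := by
  funext s
  simp only [excAt]
  rw [hg, dRight_eq hg]

private lemma excAt_sub (hf : Cadlag f) {t : ℝ≥0} (ht : f t ≠ a) :
    excAt a f t (t - gLeft a f t) = f t := by
  have h1 : gLeft a f t + (t - gLeft a f t) = t := add_tsub_cancel_of_le (gLeft_le t)
  have h2 : ((gLeft a f t + (t - gLeft a f t) : ℝ≥0) : ℝ≥0∞) < dRight a f t := by
    rw [h1]; exact lt_dRight hf ht
  simp only [excAt]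
  rw [if_pos h2, h1]

private lemma zero_sep {u u' : ℝ≥0} (h : gLeft a f u < gLeft a f u') :
    ∃ z, f z = a ∧ u < z ∧ z ≤ gLeft a f u' := by
  have h' : gLeft a f u < sSup {s : ℝ≥0 | s ≤ u' ∧ f s = a} := h
  obtain ⟨z, hz, hgz⟩ := exists_lt_of_lt_csSup' h'
  have hz2 : z ≤ gLeft a f u' := le_csSup ⟨u', fun w hw => hw.1⟩ hz
  refine ⟨z, hz.2, ?_, hz2⟩
  by_contra hzu
  push_neg at hzu
  have : z ≤ gLeft a f u := le_csSup ⟨u, fun w hw => hw.1⟩ ⟨hzu, hz.2⟩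
  exact absurd hgz (not_lt.mpr this)

end Aux

section Aux2
variable {V : Type*} [MetricSpace V] {a : V} {f : ℝ≥0 → V}

private lemma cadlag_excAt (hf : Cadlag f) (t : ℝ≥0) : Cadlag (excAt a f t) := by
  constructor
  · intro s
    by_cases hcond : ((gLeft a f t + s : ℝ≥0) : ℝ≥0∞) < dRight a f t
    · obtain ⟨r, hr1, hr2⟩ := ENNReal.lt_iff_exists_nnreal_btwn.mp hcond
      have hr1' : gLeft a f t + s < r := by exact_mod_cast hr1
      have hc : ContinuousWithinAt (fun s' => f (gLeft a f t + s')) (Set.Ici s) s :=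
        (hf.1 (gLeft a f t + s)).comp
          ((continuous_add_left (gLeft a f t)).continuousWithinAt)
          (fun s' hs' => show gLeft a f t + s ≤ gLeft a f t + s' from add_le_add_right hs' _)
      refine hc.congr_of_eventuallyEq ?_ ?_
      · have hmem : Set.Iio (r - gLeft a f t) ∈ 𝓝[Set.Ici s] s :=
          mem_nhdsWithin_of_mem_nhds (Iio_mem_nhds (lt_tsub_iff_left.mpr hr1'))
        filter_upwards [hmem] with s' hs'
        have hlt : ((gLeft a f t + s' : ℝ≥0) : ℝ≥0∞) < dRight a f t :=
          lt_trans (by exact_mod_cast lt_tsub_iff_left.mp hs') hr2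
        simp only [excAt]
        rw [if_pos hlt]
      · simp only [excAt]
        rw [if_pos hcond]
    · have hconst : ∀ s' ∈ Set.Ici s, excAt a f t s' = a := by
        intro s' hs'
        simp only [excAt]
        refine if_neg fun hlt => hcond ?_
        exact lt_of_le_of_lt (ENNReal.coe_le_coe.mpr (add_le_add_right hs' _)) hlt
      exact continuousWithinAt_const.congr hconst (hconst s (le_refl s))
  · intro s hs
    by_cases hall : ∀ s' : ℝ≥0, s' < s → ((gLeft a f t + s' : ℝ≥0) : ℝ≥0∞) < dRight a f t
    · obtain ⟨l, hl⟩ := hf.2 (gLeft a f t + s) (lt_of_lt_of_le hs le_add_self)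
      refine ⟨l, ?_⟩
      have h1 : Filter.Tendsto (fun s' => gLeft a f t + s') (𝓝[Set.Iio s] s)
          (nhds (gLeft a f t + s)) :=
        ((continuous_add_left (gLeft a f t)).continuousAt).mono_left nhdsWithin_le_nhds
      have h2 : ∀ᶠ s' in 𝓝[Set.Iio s] s, gLeft a f t + s' ∈ Set.Iio (gLeft a f t + s) :=
        eventually_mem_nhdsWithin.mono fun s' hs' => add_lt_add_right hs' (gLeft a f t)
      have hmap := tendsto_nhdsWithin_of_tendsto_nhds_of_eventually_within _ h1 h2
      have heq : (fun s' => f (gLeft a f t + s')) =ᶠ[𝓝[Set.Iio s] s] excAt a f t := by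
        filter_upwards [eventually_mem_nhdsWithin] with s' hs'
        simp only [excAt]
        rw [if_pos (hall s' hs')]
      exact Filter.Tendsto.congr' heq (hl.comp hmap)
    · push_neg at hall
      obtain ⟨s0, hs0, hcond0⟩ := hall
      have hd : dRight a f t ≤ ((gLeft a f t + s0 : ℝ≥0) : ℝ≥0∞) := hcond0
      refine ⟨a, ?_⟩
      have heq : (fun _ : ℝ≥0 => a) =ᶠ[𝓝[Set.Iio s] s] excAt a f t := by
        filter_upwards [Ioo_mem_nhdsLT hs0] with s' hs'
        simp only [excAt]
        refine (if_neg (not_lt.mpr ?_)).symm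
        exact le_trans hd (ENNReal.coe_le_coe.mpr (add_le_add_right hs'.1.le _))
      exact Filter.Tendsto.congr' heq tendsto_const_nhds

private lemma isExcursion_excAt (hf : Cadlag f) (t : ℝ≥0) :
    IsExcursion a (excAt a f t) := by
  refine ⟨cadlag_excAt hf t, ?_⟩
  intro r hr
  by_contra hra
  have hcond : ((gLeft a f t + r : ℝ≥0) : ℝ≥0∞) < dRight a f t := by
    by_contra h
    exact hra (by simp only [excAt]; exact if_neg h)
  have hA : ∀ s ∈ {s : ℝ≥0 | 0 < s ∧ excAt a f t s = a}, excAt a f t s = a ∧ r < s := by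
    rintro s ⟨hs0, hsa⟩
    refine ⟨hsa, ?_⟩
    by_contra h
    push_neg at h
    have hcs : ((gLeft a f t + s : ℝ≥0) : ℝ≥0∞) < dRight a f t :=
      lt_of_le_of_lt (ENNReal.coe_le_coe.mpr (add_le_add_right h _)) hcond
    have hfz : f (gLeft a f t + s) = a := by
      have : excAt a f t s = f (gLeft a f t + s) := by simp only [excAt]; rw [if_pos hcs]
      rw [← this]; exact hsa
    rcases le_or_gt (gLeft a f t + s) t with hle | hgt
    · have hle2 : gLeft a f t + s ≤ gLeft a f t :=
        le_csSup ⟨t, fun w hw => hw.1⟩ ⟨hle, hfz⟩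
      have : s = 0 := le_zero_iff.mp ((add_le_iff_nonpos_right _).mp hle2)
      exact absurd this (ne_of_gt hs0)
    · have : dRight a f t ≤ ((gLeft a f t + s : ℝ≥0) : ℝ≥0∞) := sInf_le ⟨_, ⟨hgt, hfz⟩, rfl⟩
      exact absurd hcs (not_lt.mpr this)
  rw [hitTime] at hr
  exact hra (eq_a_of_inf ((cadlag_excAt hf t).1 r) hA hr)

private lemma exists_high_point (hf : Cadlag f) {t : ℝ≥0} {δ' : ℝ≥0∞} (hδ' : 0 < δ')
    (hh : δ' < ⨆ s : ℝ≥0, edist (excAt a f t s) a) :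
    ∃ u, gLeft a f t ≤ u ∧ gLeft a f u = gLeft a f t ∧ δ' < edist (f u) a := by
  obtain ⟨s, hs⟩ := lt_iSup_iff.mp hh
  have hcond : ((gLeft a f t + s : ℝ≥0) : ℝ≥0∞) < dRight a f t := by
    by_contra h
    simp only [excAt, if_neg h, edist_self] at hs
    exact absurd hs (not_lt.mpr zero_le)
  refine ⟨gLeft a f t + s, le_self_add, gLeft_eq le_self_add hcond, ?_⟩
  simp only [excAt, if_pos hcond] at hs
  exact hs

end Aux2

section Aux3
variable {V : Type*} [MetricSpace V] {a : V} {f : ℝ≥0 → V}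

private lemma part1_lemma (hf : Cadlag f) (m : ℝ≥0) (δ : ℝ≥0∞) (hδ : 0 < δ) :
    {g : ℝ≥0 | g ≤ m ∧ ∃ t : ℝ≥0, f t ≠ a ∧ gLeft a f t = g ∧
      δ ≤ ⨆ s : ℝ≥0, edist (excAt a f t s) a}.Finite := by
  set S := {g : ℝ≥0 | g ≤ m ∧ ∃ t : ℝ≥0, f t ≠ a ∧ gLeft a f t = g ∧
      δ ≤ ⨆ s : ℝ≥0, edist (excAt a f t s) a} with hSdef
  by_contra hSfin
  have hS : S.Infinite := hSfin
  set δ' : ℝ≥0∞ := min δ 1 / 2 with hδ'def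
  have hmin0 : min δ 1 ≠ 0 := (lt_min hδ zero_lt_one).ne'
  have hδ'0 : 0 < δ' := ENNReal.half_pos hmin0
  have hδ'δ : δ' < δ :=
    lt_of_lt_of_le (ENNReal.half_lt_self hmin0
      (ne_top_of_le_ne_top ENNReal.one_ne_top (min_le_right _ _))) (min_le_left _ _)
  have hwit : ∀ g ∈ S, ∃ u : ℝ≥0, g ≤ u ∧ gLeft a f u = g ∧ δ' < edist (f u) a := by
    rintro g ⟨hgm, t, hta, hgt, hht⟩
    obtain ⟨u, h1, h2, h3⟩ := exists_high_point hf hδ'0 (lt_of_lt_of_le hδ'δ hht)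
    rw [hgt] at h1 h2
    exact ⟨u, h1, h2, h3⟩
  choose! u hu1 hu2 hu3 using hwit
  set Sm := {g ∈ S | ∃ g', g' ∈ S ∧ g < g'} with hSmdef
  have hSsub : Sm ⊆ S := fun g hg => hg.1
  have hdiff : (S \ Sm).Subsingleton := by
    rintro g ⟨hgS, hg⟩ g2 ⟨hg2S, hg2⟩
    have h1 : ∀ g' ∈ S, g' ≤ g := by
      intro g' hg'
      by_contra hlt
      push_neg at hlt
      exact hg ⟨hgS, g', hg', hlt⟩
    have h2 : ∀ g' ∈ S, g' ≤ g2 := by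
      intro g' hg'
      by_contra hlt
      push_neg at hlt
      exact hg2 ⟨hg2S, g', hg', hlt⟩
    exact le_antisymm (h2 g hgS) (h1 g2 hg2S)
  have hSm_inf : Sm.Infinite := by
    have h1 : (S \ (S \ Sm)).Infinite := hS.diff hdiff.finite
    rwa [Set.diff_diff_cancel_left hSsub] at h1
  have hmono : ∀ g ∈ S, ∀ g' ∈ S, g < g' → u g < u g' := by
    intro g hg g' hg' hlt
    obtain ⟨z, hz, huz, hzle⟩ := zero_sep (u := u g) (u' := u g')
      (by rw [hu2 g hg, hu2 g' hg']; exact hlt)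
    calc u g < z := huz
      _ ≤ gLeft a f (u g') := hzle
      _ = g' := hu2 g' hg'
      _ ≤ u g' := hu1 g' hg'
  set W := u '' Sm with hWdef
  have hWinf : W.Infinite := by
    refine hSm_inf.image ?_
    intro g hg g' hg' he
    rcases lt_trichotomy g g' with h | h | h
    · exact absurd he (ne_of_lt (hmono g (hSsub hg) g' (hSsub hg') h))
    · exact h
    · exact absurd he.symm (ne_of_lt (hmono g' (hSsub hg') g (hSsub hg) h))
  have hWm : W ⊆ Set.Icc 0 m := by
    rintro w ⟨g, hg, rfl⟩
    obtain ⟨g', hg'S, hgg'⟩ := hg.2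
    obtain ⟨z, hz, huz, hzle⟩ := zero_sep (u := u g) (u' := u g')
      (by rw [hu2 g (hSsub hg), hu2 g' hg'S]; exact hgg')
    refine ⟨zero_le, le_trans huz.le (le_trans hzle ?_)⟩
    rw [hu2 g' hg'S]
    exact le_trans hg'S.1 (le_refl m)
  have hWd : ∀ w ∈ W, δ' ≤ edist (f w) a := by
    rintro w ⟨g, hg, rfl⟩
    exact (hu3 g (hSsub hg)).le
  have hWsep : ∀ w ∈ W, ∀ w' ∈ W, w < w' → ∃ z, f z = a ∧ w < z ∧ z ≤ w' := by
    rintro w ⟨g, hg, rfl⟩ w' ⟨g', hg', rfl⟩ hww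
    have hgg' : g < g' := by
      rcases lt_trichotomy g g' with h | h | h
      · exact h
      · exact absurd hww (by rw [h]; exact lt_irrefl _)
      · exact absurd hww (not_lt.mpr (hmono g' (hSsub hg') g (hSsub hg) h).le)
    obtain ⟨z, hz, huz, hzle⟩ := zero_sep (u := u g) (u' := u g')
      (by rw [hu2 g (hSsub hg), hu2 g' (hSsub hg')]; exact hgg')
    refine ⟨z, hz, huz, le_trans hzle ?_⟩
    rw [hu2 g' (hSsub hg')]
    exact hu1 g' (hSsub hg')
  obtain ⟨x, -, hacc⟩ := hWinf.exists_accPt_of_subset_isCompact isCompact_Icc hWm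
  have hsplit : (𝓝[<] x ⊓ 𝓟 W).NeBot ∨ (𝓝[>] x ⊓ 𝓟 W).NeBot := by
    by_contra h
    push_neg at h
    obtain ⟨h1, h2⟩ := h
    have hc1 : Wᶜ ∈ 𝓝[<] x := Filter.inf_principal_eq_bot.mp h1
    have hc2 : Wᶜ ∈ 𝓝[>] x := Filter.inf_principal_eq_bot.mp h2
    have hcm : Wᶜ ∈ 𝓝[≠] x := by
      rw [← nhdsLT_sup_nhdsGT]
      exact Filter.mem_sup.mpr ⟨hc1, hc2⟩
    exact hacc.ne (Filter.inf_principal_eq_bot.mpr hcm)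
  rcases hsplit with hL | hR
  · haveI := hL
    have hx0 : 0 < x := by
      rcases (zero_le : 0 ≤ x).eq_or_lt with h | h
      · exfalso
        have hbot : 𝓝[<] x = ⊥ := by
          rw [← h, show Set.Iio (0:ℝ≥0) = ∅ from by ext y; simp, nhdsWithin_empty]
        rw [hbot, bot_inf_eq] at hL
        exact hL.ne rfl
      · exact h
    obtain ⟨l, hl⟩ := hf.2 x hx0
    have hfreqW : ∀ U ∈ 𝓝[<] x, (U ∩ W).Nonempty := Filter.inf_principal_neBot_iff.mp hL
    have hfreqZ : ∀ U ∈ 𝓝[<] x, (U ∩ {z | f z = a}).Nonempty := by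
      intro U hU
      obtain ⟨w, hw, hsub⟩ := (nhdsLT_basis_of_exists_lt ⟨0, hx0⟩).mem_iff.mp hU
      obtain ⟨u1, hu1m, hu1W⟩ := hfreqW (Set.Ioo w x) (Ioo_mem_nhdsLT hw)
      obtain ⟨u2, hu2m, hu2W⟩ := hfreqW (Set.Ioo u1 x) (Ioo_mem_nhdsLT hu1m.2)
      obtain ⟨z, hz, h1z, h2z⟩ := hWsep u1 hu1W u2 hu2W hu2m.1
      exact ⟨z, hsub ⟨lt_trans hu1m.1 h1z, lt_of_le_of_lt h2z hu2m.2⟩, hz⟩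
    haveI hZb : (𝓝[<] x ⊓ 𝓟 {z | f z = a}).NeBot := Filter.inf_principal_neBot_iff.mpr hfreqZ
    have hla : l = a := lim_eq_a (F := 𝓝[<] x ⊓ 𝓟 {z | f z = a}) (hl.mono_left inf_le_left)
      (Filter.eventually_inf_principal.mpr (Filter.Eventually.of_forall fun z hz => hz))
    have hld : δ' ≤ edist l a := lim_ge (hl.mono_left inf_le_left)
      (Filter.eventually_inf_principal.mpr (Filter.Eventually.of_forall fun w hw => hWd w hw))
    rw [hla, edist_self] at hld
    exact absurd hld (not_le.mpr hδ'0)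
  · haveI := hR
    have hxt : Filter.Tendsto f (𝓝[>] x) (nhds (f x)) :=
      (hf.1 x).mono_left (nhdsWithin_mono x Set.Ioi_subset_Ici_self)
    have hfreqW : ∀ U ∈ 𝓝[>] x, (U ∩ W).Nonempty := Filter.inf_principal_neBot_iff.mp hR
    have hfreqZ : ∀ U ∈ 𝓝[>] x, (U ∩ {z | f z = a}).Nonempty := by
      intro U hU
      obtain ⟨w, hw, hsub⟩ := (nhdsGT_basis x).mem_iff.mp hU
      obtain ⟨u1, hu1m, hu1W⟩ := hfreqW (Set.Ioo x w) (Ioo_mem_nhdsGT hw)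
      obtain ⟨u2, hu2m, hu2W⟩ := hfreqW (Set.Ioo x u1 ) (Ioo_mem_nhdsGT hu1m.1)
      obtain ⟨z, hz, h1z, h2z⟩ := hWsep u2 hu2W u1 hu1W hu2m.2
      exact ⟨z, hsub ⟨lt_trans hu2m.1 h1z, lt_of_le_of_lt h2z hu1m.2⟩, hz⟩
    haveI hZb : (𝓝[>] x ⊓ 𝓟 {z | f z = a}).NeBot := Filter.inf_principal_neBot_iff.mpr hfreqZ
    have hla : f x = a := lim_eq_a (F := 𝓝[>] x ⊓ 𝓟 {z | f z = a}) (hxt.mono_left inf_le_left)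
      (Filter.eventually_inf_principal.mpr (Filter.Eventually.of_forall fun z hz => hz))
    have hld : δ' ≤ edist (f x) a := lim_ge (hxt.mono_left inf_le_left)
      (Filter.eventually_inf_principal.mpr (Filter.Eventually.of_forall fun w hw => hWd w hw))
    rw [hla, edist_self] at hld
    exact absurd hld (not_le.mpr hδ'0)

end Aux3

section Aux4
variable {V : Type*} [MetricSpace V] {a : V} {f : ℝ≥0 → V}

private lemma part2_lemma (hf : Cadlag f) (φ : (ℝ≥0 → V) → ℝ≥0∞)
    (hφ : ∀ e : ℝ≥0 → V, IsExcursion a e → (0 < φ e ↔ e ≠ fun _ => a)) (m : ℝ≥0) :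
    Filter.Tendsto
      (fun ε : ℝ≥0 => ⨆ t : Set.Icc (0:ℝ≥0) m, edist (PhiTrunc a φ ε f t) (f t))
      (nhdsWithin 0 (Set.Ioi 0)) (nhds 0) := by
  rw [ENNReal.tendsto_nhds_zero]
  intro η hη
  have hSfin := part1_lemma (a := a) hf m η hη
  set S := {g : ℝ≥0 | g ≤ m ∧ ∃ t : ℝ≥0, f t ≠ a ∧ gLeft a f t = g ∧
      η ≤ ⨆ s : ℝ≥0, edist (excAt a f t s) a} with hSdef
  have hwit : ∀ g ∈ S, ∃ t : ℝ≥0, f t ≠ a ∧ gLeft a f t = g ∧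
      η ≤ ⨆ s : ℝ≥0, edist (excAt a f t s) a := fun g hg => hg.2
  choose! T hT1 hT2 hT3 using hwit
  set K := insert (1:ℝ≥0∞) ((fun g => φ (excAt a f (T g))) '' S) with hKdef
  have hKfin : K.Finite := ((hSfin.image _).insert _)
  have hKne : K.Nonempty := ⟨1, Set.mem_insert _ _⟩
  have hKpos : ∀ c ∈ K, 0 < c := by
    rintro c (rfl | ⟨g, hg, rfl⟩)
    · exact zero_lt_one
    · refine (hφ _ (isExcursion_excAt hf _)).mpr ?_
      intro hconst
      have h3 := hT3 g hg
      rw [hconst] at h3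
      simp only [edist_self, iSup_const] at h3
      exact absurd h3 (not_le.mpr hη)
  have hc0 : 0 < sInf K := hKpos _ (hKne.csInf_mem hKfin)
  obtain ⟨r, hr0, hrK⟩ := ENNReal.lt_iff_exists_nnreal_btwn.mp hc0
  have hr0' : 0 < r := by exact_mod_cast hr0
  filter_upwards [mem_nhdsWithin_of_mem_nhds (Iio_mem_nhds hr0')] with ε hεr
  apply iSup_le
  rintro ⟨t, ht0, htm⟩
  simp only [PhiTrunc]
  by_cases hc : (ε : ℝ≥0∞) < φ (excAt a f t)
  · rw [if_pos hc, edist_self]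
    exact zero_le
  · rw [if_neg hc]
    by_cases hta : f t = a
    · rw [hta, edist_self]
      exact zero_le
    · have hnotS : ¬ η ≤ ⨆ s : ℝ≥0, edist (excAt a f t s) a := by
        intro hht
        have hgS : gLeft a f t ∈ S := ⟨le_trans (gLeft_le t) htm, t, hta, rfl, hht⟩
        have hexc : excAt a f (T (gLeft a f t)) = excAt a f t := excAt_eq (hT2 _ hgS)
        have hle : sInf K ≤ φ (excAt a f t) := by
          rw [← hexc]
          exact sInf_le (Set.mem_insert_of_mem _ ⟨_, hgS, rfl⟩)
        have : sInf K < sInf K :=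
          lt_of_le_of_lt (le_trans hle (not_lt.mp hc))
            (lt_trans (by exact_mod_cast hεr) hrK)
        exact absurd this (lt_irrefl _)
      have hlt : edist (f t) a < η := by
        have hle : edist (f t) a ≤ ⨆ s : ℝ≥0, edist (excAt a f t s) a := by
          have h := le_iSup (fun s : ℝ≥0 => edist (excAt a f t s) a) (t - gLeft a f t)
          rwa [excAt_sub hf hta] at h
        exact lt_of_le_of_lt hle (not_le.mp hnotS)
      rw [edist_comm]
      exact hlt.le

end Aux4

/-- finitely many `δ`-high excursions start before `m`;
consequently `Φ_ε(f) → f` uniformly on compacts, hence in J1, as `ε → 0`. -/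
theorem statement3 {V : Type*} [MetricSpace V] (a : V) (f : ℝ≥0 → V) (hf : Cadlag f)
    (φ : (ℝ≥0 → V) → ℝ≥0∞)
    (hφ : ∀ e : ℝ≥0 → V, IsExcursion a e → (0 < φ e ↔ e ≠ fun _ => a)) :
    (∀ m : ℝ≥0, ∀ δ : ℝ≥0∞, 0 < δ →
      {g : ℝ≥0 | g ≤ m ∧ ∃ t : ℝ≥0, f t ≠ a ∧ gLeft a f t = g ∧
        δ ≤ ⨆ s : ℝ≥0, edist (excAt a f t s) a}.Finite) ∧
    (∀ m : ℝ≥0, Filter.Tendsto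
      (fun ε : ℝ≥0 => ⨆ t : Set.Icc (0:ℝ≥0) m, edist (PhiTrunc a φ ε f t) (f t))
      (nhdsWithin 0 (Set.Ioi 0)) (nhds 0)) ∧
    J1Tendsto (nhdsWithin (0:ℝ≥0) (Set.Ioi 0)) (fun ε => PhiTrunc a φ ε f) f := by
  refine ⟨fun m δ hδ => part1_lemma hf m δ hδ, fun m => part2_lemma hf φ hφ m, ?_⟩
  refine ⟨fun _ => id, fun _ => ⟨strictMono_id, Function.bijective_id⟩, ?_,
    Set.univ, fun r => ⟨r, Set.mem_univ r, le_refl r⟩, ?_⟩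
  · have h : (fun _ : ℝ≥0 => ⨆ s : ℝ≥0, edist (id s) s) = fun _ : ℝ≥0 => (0:ℝ≥0∞) := by
      funext ε
      simp [edist_self]
    rw [h]
    exact tendsto_const_nhds
  · intro m _
    have h := part2_lemma (a := a) hf φ hφ m
    simpa [id_eq] using h
end

section
/- Let S_n, S be subdivisions (nondecreasing [0,∞]-valued sequences (s_k) with s_0 = 0, s_k = +∞ for k ≥ |S| where |S| = inf{k : s_k = +∞}, and ∪_k [s_k, s_{k+1}) = [0,∞)), and define the truncation operator Φ^S(f)(t) = f(t) if t lies in some even-indexed interval [s_{2k+1}, s_{2k+2}) and Φ^S(f)(t) = a otherwise. If S_n → S pointwise, f_n → f in the J1 topology, and the sequence (Φ^{S_n}(f_n)) is relatively compact in the J1 topology, then Φ^{S_n}(f_n) → Φ^S(f) in the J1 topology. -/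
open scoped NNReal ENNReal Topology
open Filter Set

noncomputable section

/-- A subdivision of `[0,∞)`: a nondecreasing `[0,∞]`-valued sequence whose
half-open intervals `[s_k, s_{k+1})` cover `[0,∞)`. -/
def IsSubdivision (S : ℕ → ℝ≥0∞) : Prop :=
  Monotone S ∧ ∀ t : ℝ≥0, ∃ k : ℕ, S k ≤ (t : ℝ≥0∞) ∧ (t : ℝ≥0∞) < S (k + 1)

open Classical in
/-- The truncation operator `Φ^S`: keep `f` on the even intervals
`[s_{2k+1}, s_{2k+2})`, truncate to `a` elsewhere. -/
def PhiSub {V : Type*} (a : V) (S : ℕ → ℝ≥0∞) (f : ℝ≥0 → V) : ℝ≥0 → V :=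
  fun t => if ∃ k : ℕ, S (2*k+1) ≤ (t : ℝ≥0∞) ∧ (t : ℝ≥0∞) < S (2*k+2) then f t else a

end

/-- Relative compactness for J1: every subsequence has a further subsequence
converging in J1 to some càdlàg limit. -/
def J1RelCompact {V : Type*} [PseudoMetricSpace V] (f : ℕ → ℝ≥0 → V) : Prop :=
  ∀ u : ℕ → ℕ, StrictMono u → ∃ w : ℕ → ℕ, StrictMono w ∧ ∃ g : ℝ≥0 → V,
    Cadlag g ∧ J1Tendsto Filter.atTop (fun n => f (u (w n))) g


section Part1
variable {V : Type*} [PseudoMetricSpace V]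

lemma isTimeChange_id : IsTimeChange (id : ℝ≥0 → ℝ≥0) :=
  ⟨strictMono_id, Function.bijective_id⟩

instance : Nonempty {l : ℝ≥0 → ℝ≥0 // IsTimeChange l} := ⟨⟨id, isTimeChange_id⟩⟩

/-- Skorokhod-type distance functional on `[0,m]`. -/
noncomputable def Dst (m : ℝ≥0) (h g : ℝ≥0 → V) : ℝ≥0∞ :=
  ⨅ l : {l : ℝ≥0 → ℝ≥0 // IsTimeChange l},
    max (⨆ s : ℝ≥0, edist (l.1 s) s)
      (⨆ s : Set.Icc (0:ℝ≥0) m, edist (h (l.1 (s:ℝ≥0))) (g (s:ℝ≥0)))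

lemma iSup_Icc_mono {m m' : ℝ≥0} (h : m ≤ m') (F : ℝ≥0 → ℝ≥0∞) :
    (⨆ s : Set.Icc (0:ℝ≥0) m, F (s:ℝ≥0)) ≤ ⨆ s : Set.Icc (0:ℝ≥0) m', F (s:ℝ≥0) := by
  refine iSup_le fun s => ?_
  exact le_iSup_of_le ⟨(s:ℝ≥0), s.2.1, s.2.2.trans h⟩ le_rfl

lemma J1Tendsto.dst_tendsto {f : ℕ → ℝ≥0 → V} {g : ℝ≥0 → V}
    (h : J1Tendsto Filter.atTop f g) (m : ℝ≥0) :
    Tendsto (fun i => Dst m (f i) g) atTop (nhds 0) := by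
  obtain ⟨l, hl, h0, M, hM, hconv⟩ := h
  obtain ⟨m', hm'M, hmm'⟩ := hM m
  have hb : ∀ i, Dst m (f i) g ≤
      max (⨆ s : ℝ≥0, edist (l i s) s)
        (⨆ s : Set.Icc (0:ℝ≥0) m', edist (f i (l i (s:ℝ≥0))) (g (s:ℝ≥0))) := by
    intro i
    refine (iInf_le _ ⟨l i, hl i⟩).trans ?_
    exact max_le_max le_rfl (iSup_Icc_mono hmm' (fun s => edist (f i (l i s)) (g s)))
  have hmax := h0.max (hconv m' hm'M)
  rw [max_self] at hmax
  exact tendsto_of_tendsto_of_tendsto_of_le_of_le' tendsto_const_nhds hmax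
    (Filter.Eventually.of_forall fun i => zero_le)
    (Filter.Eventually.of_forall hb)

lemma tendsto_eps : Tendsto (fun n : ℕ => ((n:ℝ≥0∞)+1)⁻¹) atTop (nhds 0) := by
  refine tendsto_of_tendsto_of_tendsto_of_le_of_le' tendsto_const_nhds
    ENNReal.tendsto_inv_nat_nhds_zero
    (Filter.Eventually.of_forall fun n => zero_le)
    (Filter.Eventually.of_forall fun n => ?_)
  exact ENNReal.inv_le_inv.2 (le_add_right le_rfl)

lemma eps_pos (n : ℕ) : (0:ℝ≥0∞) < ((n:ℝ≥0∞)+1)⁻¹ :=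
  ENNReal.inv_pos.2 (by simp)

lemma j1_of_dst {f : ℕ → ℝ≥0 → V} {g : ℝ≥0 → V}
    (H : ∀ m : ℝ≥0, Tendsto (fun i => Dst m (f i) g) atTop (nhds 0)) :
    J1Tendsto Filter.atTop f g := by
  classical
  set ε : ℕ → ℝ≥0∞ := fun n => ((n:ℝ≥0∞)+1)⁻¹ with hε
  have hex : ∀ n : ℕ, ∃ N : ℕ, ∀ i ≥ N, Dst (n : ℝ≥0) (f i) g < ε n := by
    intro n
    have := (H (n : ℝ≥0)).eventually (eventually_lt_nhds (eps_pos n))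
    exact eventually_atTop.1 this
  choose N hN using hex
  set N' : ℕ → ℕ := fun n => Nat.rec (N 0) (fun k ih => max (N (k+1)) (ih + 1)) n with hN'
  have hN'mono : StrictMono N' := by
    apply strictMono_nat_of_lt_succ
    intro n
    exact lt_of_lt_of_le (Nat.lt_succ_self _) (le_max_right _ _)
  have hNN' : ∀ n, N n ≤ N' n := by
    intro n
    cases n with
    | zero => exact le_rfl
    | succ k => exact le_max_left _ _
  set J : ℕ → ℕ := fun i => Nat.findGreatest (fun n => N' n ≤ i) i with hJ
  have hJ1 : ∀ i, N' 0 ≤ i → N' (J i) ≤ i := fun i hi =>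
    Nat.findGreatest_spec (P := fun n => N' n ≤ i) (m := 0) (Nat.zero_le i) hi
  have hJ2 : ∀ n i, N' n ≤ i → n ≤ J i := fun n i h =>
    Nat.le_findGreatest (P := fun k => N' k ≤ i) (le_trans hN'mono.le_apply h) h
  have hJtop : Tendsto J atTop atTop :=
    tendsto_atTop_atTop.2 fun n => ⟨N' n, fun i hi => hJ2 n i hi⟩
  have hεJ : Tendsto (fun i => ε (J i)) atTop (nhds 0) := tendsto_eps.comp hJtop
  have hch : ∀ i : ℕ, ∃ l : ℝ≥0 → ℝ≥0, IsTimeChange l ∧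
      (N' 0 ≤ i → max (⨆ s : ℝ≥0, edist (l s) s)
        (⨆ s : Set.Icc (0:ℝ≥0) ((J i : ℕ):ℝ≥0), edist (f i (l (s:ℝ≥0))) (g (s:ℝ≥0))) < ε (J i)) := by
    intro i
    by_cases hi : N' 0 ≤ i
    · have h1 : Dst ((J i : ℕ):ℝ≥0) (f i) g < ε (J i) :=
        hN (J i) i (le_trans (hNN' _) (hJ1 i hi))
      rw [Dst, iInf_lt_iff] at h1
      obtain ⟨⟨l, hl⟩, hlt⟩ := h1
      exact ⟨l, hl, fun _ => hlt⟩
    · exact ⟨id, isTimeChange_id, fun h => absurd h hi⟩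
  choose l hl hlt using hch
  refine ⟨l, hl, ?_, Set.univ, fun r => ⟨r, trivial, le_rfl⟩, ?_⟩
  · refine tendsto_of_tendsto_of_tendsto_of_le_of_le' tendsto_const_nhds hεJ
      (Filter.Eventually.of_forall fun _ => zero_le) ?_
    filter_upwards [eventually_ge_atTop (N' 0)] with i hi
    exact ((le_max_left _ _).trans_lt (hlt i hi)).le
  · intro m _
    refine tendsto_of_tendsto_of_tendsto_of_le_of_le' tendsto_const_nhds hεJ
      (Filter.Eventually.of_forall fun _ => zero_le) ?_
    filter_upwards [eventually_ge_atTop (N' 0), hJtop.eventually_ge_atTop ⌈m⌉₊] with i hi1 hi2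
    have hm : m ≤ ((J i : ℕ):ℝ≥0) := le_trans (Nat.le_ceil m) (by exact_mod_cast hi2)
    exact (((iSup_Icc_mono hm (fun s => edist (f i (l i s)) (g s))).trans (le_max_right _ _)).trans_lt (hlt i hi1)).le

lemma J1Tendsto.comp_strictMono {f : ℕ → ℝ≥0 → V} {g : ℝ≥0 → V}
    (h : J1Tendsto Filter.atTop f g) {v : ℕ → ℕ} (hv : StrictMono v) :
    J1Tendsto Filter.atTop (fun n => f (v n)) g := by
  obtain ⟨l, hl, h0, M, hM, hconv⟩ := h
  exact ⟨fun n => l (v n), fun n => hl _, h0.comp hv.tendsto_atTop, M, hM,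
    fun m hm => (hconv m hm).comp hv.tendsto_atTop⟩

end Part1

section Part2
variable {V : Type*} [MetricSpace V]

lemma parity_not_mem {T : ℕ → ℝ≥0∞} (hT : Monotone T) {t : ℝ≥0∞} {k : ℕ}
    (h1 : T (2*k) ≤ t) (h2 : t < T (2*k+1)) :
    ¬ ∃ k' : ℕ, T (2*k'+1) ≤ t ∧ t < T (2*k'+2) := by
  rintro ⟨k', hk1, hk2⟩
  rcases le_or_gt (2*k+1) (2*k'+1) with h | h
  · exact absurd (le_trans (hT h) hk1) (not_le.2 h2)
  · have h3 : 2*k'+2 ≤ 2*k := by omega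
    exact absurd (le_trans (hT h3) h1) (not_le.2 hk2)

lemma nnreal_Ici_zero : Set.Ici (0:ℝ≥0) = Set.univ :=
  Set.eq_univ_of_forall fun x => zero_le (a := x)

lemma cadlag_countable_discont {F : ℝ≥0 → V} (hF : Cadlag F) :
    {t : ℝ≥0 | ¬ ContinuousAt F t}.Countable := by
  classical
  have hne : ∀ t : ℝ≥0, 0 < t → (nhdsWithin t (Set.Iio t)).NeBot := by
    intro t ht
    exact nhdsWithin_Iio_self_neBot' ⟨0, ht⟩
  set L : ℝ≥0 → V := fun t =>
    if h : ∃ L, Tendsto F (nhdsWithin t (Set.Iio t)) (nhds L) then h.choose else F t with hLdef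
  have hLt : ∀ t : ℝ≥0, 0 < t → Tendsto F (nhdsWithin t (Set.Iio t)) (nhds (L t)) := by
    intro t ht
    have h : ∃ L, Tendsto F (nhdsWithin t (Set.Iio t)) (nhds L) := hF.2 t ht
    rw [hLdef]
    simp only [dif_pos h]
    exact h.choose_spec
  have hjump : ∀ t ∈ {t : ℝ≥0 | ¬ ContinuousAt F t}, 0 < t ∧ 0 < dist (L t) (F t) := by
    intro t ht
    have hpos : 0 < t := by
      rcases eq_or_lt_of_le (zero_le (a := t)) with h | h
      · exfalso
        apply ht
        have h1 : ContinuousWithinAt F (Set.Ici t) t := hF.1 t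
        rw [← h, nnreal_Ici_zero, continuousWithinAt_univ] at h1
        rwa [← h]
      · exact h
    refine ⟨hpos, ?_⟩
    rw [dist_pos]
    intro hLeq
    apply ht
    have h2 : Tendsto F (nhdsWithin t (Set.Iio t)) (nhds (F t)) := hLeq ▸ hLt t hpos
    have h3 : Tendsto F (nhdsWithin t (Set.Ici t)) (nhds (F t)) := hF.1 t
    rw [ContinuousAt, ← nhdsLT_sup_nhdsGE t, tendsto_sup]
    exact ⟨h2, h3⟩
  have hsub : {t : ℝ≥0 | ¬ ContinuousAt F t} ⊆
      ⋃ n : ℕ, {t : ℝ≥0 | 0 < t ∧ 1/((n:ℝ)+1) < dist (L t) (F t)} := by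
    intro t ht
    obtain ⟨hpos, hd⟩ := hjump t ht
    obtain ⟨n, hn⟩ := exists_nat_one_div_lt hd
    exact Set.mem_iUnion.2 ⟨n, hpos, hn⟩
  refine Set.Countable.mono hsub (Set.countable_iUnion fun n => ?_)
  set Dn := {t : ℝ≥0 | 0 < t ∧ 1/((n:ℝ)+1) < dist (L t) (F t)} with hDn
  set εn : ℝ := 1/(3*((n:ℝ)+1)) with hεn
  have hεpos : (0:ℝ) < εn := by rw [hεn]; positivity
  have hq : ∀ t : ℝ≥0, ∃ q : ℚ, t ∈ Dn → (Real.toNNReal q < t ∧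
      ∀ s : ℝ≥0, Real.toNNReal q < s → s < t → dist (F s) (L t) < εn) := by
    intro t
    by_cases ht : t ∈ Dn
    · obtain ⟨hpos, _⟩ := ht
      have hev : {s : ℝ≥0 | dist (F s) (L t) < εn} ∈ nhdsWithin t (Set.Iio t) := by
        have h1 := hLt t hpos (Metric.ball_mem_nhds (L t) hεpos)
        exact h1
      rw [mem_nhdsLT_iff_exists_Ioo_subset' hpos] at hev
      obtain ⟨c, hc, hsub'⟩ := hev
      obtain ⟨q, hq1, hq2⟩ := exists_rat_btwn (NNReal.coe_lt_coe.2 hc)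
      have hq0 : (0:ℝ) ≤ (q:ℝ) := le_trans c.coe_nonneg hq1.le
      have hcoe : ((Real.toNNReal q : ℝ≥0) : ℝ) = (q:ℝ) := Real.coe_toNNReal _ hq0
      have hct : c < Real.toNNReal q := by rw [← NNReal.coe_lt_coe, hcoe]; exact hq1
      have hqt : Real.toNNReal q < t := by rw [← NNReal.coe_lt_coe, hcoe]; exact hq2
      exact ⟨q, fun _ => ⟨hqt, fun s hs1 hs2 => hsub' ⟨lt_trans hct hs1, hs2⟩⟩⟩
    · exact ⟨0, fun h => absurd h ht⟩
  choose φ hφ using hq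
  have key : ∀ t t', t ∈ Dn → t' ∈ Dn → t < t' → φ t ≠ φ t' := by
    intro t t' ht ht' hlt heq
    obtain ⟨hpos, hjmp⟩ := ht
    have hqt : Real.toNNReal (φ t') < t := by
      rw [← heq]; exact (hφ t ⟨hpos, hjmp⟩).1
    have hprop := (hφ t' ht').2
    haveI := hne t hpos
    have h1 : dist (L t) (L t') ≤ εn := by
      apply le_of_tendsto ((hLt t hpos).dist tendsto_const_nhds)
      filter_upwards [Ioo_mem_nhdsLT hqt] with s hs
      exact (hprop s hs.1 (hs.2.trans hlt)).le
    haveI : (nhdsWithin t (Set.Ici t)).NeBot := nhdsGE_neBot t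
    have h2 : dist (F t) (L t') ≤ εn := by
      apply le_of_tendsto ((hF.1 t).dist tendsto_const_nhds)
      filter_upwards [Ico_mem_nhdsGE hlt] with s hs
      exact (hprop s (lt_of_lt_of_le hqt hs.1) hs.2).le
    have htri : dist (L t) (F t) ≤ 2*εn := by
      calc dist (L t) (F t) ≤ dist (L t) (L t') + dist (L t') (F t) := dist_triangle _ _ _
      _ ≤ εn + εn := add_le_add h1 (by rwa [dist_comm] at h2)
      _ = 2*εn := by ring
    have h3 : 1/((n:ℝ)+1) = 3 * εn := by rw [hεn]; field_simp
    rw [h3] at hjmp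
    linarith
  have hinj : Set.InjOn φ Dn := by
    intro t ht t' ht' heq
    rcases lt_trichotomy t t' with h | h | h
    · exact absurd heq (key t t' ht ht' h)
    · exact h
    · exact absurd heq.symm (key t' t ht' ht h)
  rw [Set.countable_iff_exists_injOn]
  exact ⟨fun t => Encodable.encode (φ t),
    fun t ht t' ht' h => hinj ht ht' (Encodable.encode_injective h)⟩

lemma Ioo_nnreal_uncountable {t x : ℝ≥0} (h : t < x) : ¬ (Set.Ioo t x).Countable := by
  intro hc
  have h1 : Set.Ioo (t:ℝ) (x:ℝ) ⊆ (fun s : ℝ≥0 => (s:ℝ)) '' Set.Ioo t x := by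
    rintro r ⟨hr1, hr2⟩
    have hr0 : (0:ℝ) ≤ r := le_trans t.coe_nonneg hr1.le
    refine ⟨Real.toNNReal r, ⟨?_, ?_⟩, Real.coe_toNNReal _ hr0⟩
    · rw [← NNReal.coe_lt_coe, Real.coe_toNNReal _ hr0]; exact hr1
    · rw [← NNReal.coe_lt_coe, Real.coe_toNNReal _ hr0]; exact hr2
  have h2 : (Set.Ioo (t:ℝ) (x:ℝ)).Countable := (hc.image _).mono h1
  have h3 := Cardinal.mk_Ioo_real (NNReal.coe_lt_coe.2 h)
  rw [Set.countable_iff_exists_injective] at h2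
  obtain ⟨f, hf⟩ := h2
  have h4 : Cardinal.mk (Set.Ioo (t:ℝ) (x:ℝ)) ≤ Cardinal.aleph0 := by
    calc Cardinal.mk (Set.Ioo (t:ℝ) (x:ℝ)) ≤ Cardinal.mk ℕ := Cardinal.mk_le_of_injective hf
    _ = Cardinal.aleph0 := Cardinal.mk_nat
  rw [h3] at h4
  exact absurd h4 (not_le.2 Cardinal.aleph0_lt_continuum)

lemma eq_of_right_cont {g h : ℝ≥0 → V}
    (hg : ∀ t, ContinuousWithinAt g (Set.Ici t) t)
    (hh : ∀ t, ContinuousWithinAt h (Set.Ici t) t)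
    {E : Set ℝ≥0} (hE : E.Countable) (heq : ∀ s ∉ E, g s = h s) : g = h := by
  funext t
  have hx : ∀ j : ℕ, ∃ x : ℝ≥0, x ∈ Set.Ioo t (t + ((j:ℝ≥0)+1)⁻¹) ∧ x ∉ E := by
    intro j
    by_contra hcon
    push_neg at hcon
    have hlt : t < t + ((j:ℝ≥0)+1)⁻¹ := lt_add_of_pos_right t (by positivity)
    exact Ioo_nnreal_uncountable hlt (hE.mono hcon)
  choose x hx1 hx2 using hx
  have hupper : Tendsto (fun j : ℕ => t + ((j:ℝ≥0)+1)⁻¹) atTop (nhds t) := by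
    have h1 : Tendsto (fun j : ℕ => ((j:ℝ≥0)+1)⁻¹) atTop (nhds 0) := by
      have h2 := (tendsto_inv_atTop_nhds_zero_nat (𝕜 := ℝ≥0)).comp (tendsto_add_atTop_nat 1)
      have h3 : (fun j : ℕ => (((j+1:ℕ):ℝ≥0))⁻¹) = fun j : ℕ => ((j:ℝ≥0)+1)⁻¹ := by
        funext j; push_cast; ring_nf
      rwa [Function.comp_def, h3] at h2
    simpa using tendsto_const_nhds.add h1
  have hxt : Tendsto x atTop (nhds t) :=
    tendsto_of_tendsto_of_tendsto_of_le_of_le' tendsto_const_nhds hupper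
      (Filter.Eventually.of_forall fun j => (hx1 j).1.le)
      (Filter.Eventually.of_forall fun j => (hx1 j).2.le)
  have hxIci : Tendsto x atTop (nhdsWithin t (Set.Ici t)) :=
    tendsto_nhdsWithin_of_tendsto_nhds_of_eventually_within _ hxt
      (Filter.Eventually.of_forall fun j => (hx1 j).1.le)
  have hgl : Tendsto (fun j => g (x j)) atTop (nhds (g t)) := (hg t).tendsto.comp hxIci
  have hhl : Tendsto (fun j => h (x j)) atTop (nhds (h t)) := (hh t).tendsto.comp hxIci
  have heq' : (fun j => g (x j)) = fun j => h (x j) := funext fun j => heq _ (hx2 j)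
  rw [heq'] at hgl
  exact tendsto_nhds_unique hgl hhl

lemma phiSub_rightCont (a : V) {S : ℕ → ℝ≥0∞} {F : ℝ≥0 → V}
    (hS : IsSubdivision S) (hFr : ∀ t, ContinuousWithinAt F (Set.Ici t) t) (t : ℝ≥0) :
    ContinuousWithinAt (PhiSub a S F) (Set.Ici t) t := by
  classical
  by_cases hc : ∃ k : ℕ, S (2*k+1) ≤ (t:ℝ≥0∞) ∧ (t:ℝ≥0∞) < S (2*k+2)
  · obtain ⟨k, hk1, hk2⟩ := hc
    have hU : {s : ℝ≥0 | (s:ℝ≥0∞) < S (2*k+2)} ∈ nhds t :=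
      (isOpen_Iio.preimage ENNReal.continuous_coe).mem_nhds hk2
    refine (hFr t).congr_of_eventuallyEq ?_ ?_
    · filter_upwards [mem_nhdsWithin_of_mem_nhds hU, self_mem_nhdsWithin] with s hs hs'
      simp only [PhiSub]
      exact if_pos ⟨k, le_trans hk1 (ENNReal.coe_le_coe.2 hs'), hs⟩
    · simp only [PhiSub]
      exact if_pos ⟨k, hk1, hk2⟩
  · obtain ⟨j, hj1, hj2⟩ := hS.2 t
    obtain ⟨k, rfl | rfl⟩ := Nat.even_or_odd' j
    · have hU : {s : ℝ≥0 | (s:ℝ≥0∞) < S (2*k+1)} ∈ nhds t :=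
        (isOpen_Iio.preimage ENNReal.continuous_coe).mem_nhds hj2
      have heq : ∀ᶠ s in nhdsWithin t (Set.Ici t), PhiSub a S F s = (fun _ => a) s := by
        filter_upwards [mem_nhdsWithin_of_mem_nhds hU, self_mem_nhdsWithin] with s hs hs'
        simp only [PhiSub]
        exact if_neg (parity_not_mem hS.1 (le_trans hj1 (ENNReal.coe_le_coe.2 hs')) hs)
      refine (continuousWithinAt_const (b := a)).congr_of_eventuallyEq heq ?_
      simp only [PhiSub]
      exact if_neg hc
    · exfalso
      apply hc
      refine ⟨k, hj1, ?_⟩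
      have : 2*k+1+1 = 2*k+2 := by ring
      rwa [this] at hj2

end Part2

section Part3
variable {V : Type*} [MetricSpace V]

lemma key_ident (a : V) (T : ℕ → ℕ → ℝ≥0∞) (S : ℕ → ℝ≥0∞)
    (φ : ℕ → ℝ≥0 → V) (F : ℝ≥0 → V) (g : ℝ≥0 → V)
    (hT : ∀ n, IsSubdivision (T n)) (hS : IsSubdivision S)
    (hFc : Cadlag F) (hg : Cadlag g)
    (hTconv : ∀ k, Tendsto (fun n => T n k) atTop (nhds (S k)))
    (hφF : J1Tendsto Filter.atTop φ F)
    (hJ : J1Tendsto Filter.atTop (fun n => PhiSub a (T n) (φ n)) g) :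
    g = PhiSub a S F := by
  classical
  obtain ⟨l, hl, hl0, Mg, hMg, hMgc⟩ := hJ
  obtain ⟨lam, hlam, hlam0, MF, hMF, hMFc⟩ := hφF
  set E : Set ℝ≥0 := {s | ¬ ContinuousAt F s} ∪ ⋃ k : ℕ, {s : ℝ≥0 | (s:ℝ≥0∞) = S k} with hE
  have hEc : E.Countable := by
    refine (cadlag_countable_discont hFc).union (Set.countable_iUnion fun k => ?_)
    refine Set.Subsingleton.countable fun s hs s' hs' => ?_
    have h : (s:ℝ≥0∞) = (s':ℝ≥0∞) := hs.trans hs'.symm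
    exact_mod_cast h
  have claim : ∀ s ∉ E, g s = PhiSub a S F s := by
    intro s hsE
    have hcont : ContinuousAt F s := by
      by_contra h; exact hsE (Or.inl h)
    have hneq : ∀ k, (s:ℝ≥0∞) ≠ S k := by
      intro k h; exact hsE (Or.inr (Set.mem_iUnion.2 ⟨k, h⟩))
    have hls : Tendsto (fun n => l n s) atTop (nhds s) := by
      rw [tendsto_iff_edist_tendsto_0]
      exact tendsto_of_tendsto_of_tendsto_of_le_of_le tendsto_const_nhds hl0
        (fun n => zero_le) (fun n => le_iSup (fun u => edist (l n u) u) s)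
    have hlsE : Tendsto (fun n => ((l n s : ℝ≥0) : ℝ≥0∞)) atTop (nhds (s:ℝ≥0∞)) :=
      ENNReal.tendsto_coe.2 hls
    obtain ⟨mg, hmgM, hsmg⟩ := hMg s
    have he1 := hMgc mg hmgM
    have hbound1 : ∀ n, edist (PhiSub a (T n) (φ n) (l n s)) (g s) ≤
        (⨆ u : Set.Icc (0:ℝ≥0) mg, edist (PhiSub a (T n) (φ n) (l n (u:ℝ≥0))) (g (u:ℝ≥0))) :=
      fun n => le_iSup_of_le ⟨s, zero_le, hsmg⟩ le_rfl
    obtain ⟨j, hj1, hj2⟩ := hS.2 s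
    have hj1' : S j < (s:ℝ≥0∞) := lt_of_le_of_ne hj1 (fun h => hneq j h.symm)
    obtain ⟨k, rfl | rfl⟩ := Nat.even_or_odd' j
    · -- odd interval [S (2k), S (2k+1)) : value a
      have hev1 : ∀ᶠ n in atTop, T n (2*k) < ((l n s : ℝ≥0):ℝ≥0∞) :=
        (hTconv (2*k)).eventually_lt hlsE hj1'
      have hev2 : ∀ᶠ n in atTop, ((l n s:ℝ≥0):ℝ≥0∞) < T n (2*k+1) :=
        hlsE.eventually_lt (hTconv (2*k+1)) hj2
      have hga : g s = a := by
        have hle : ∀ᶠ n in atTop, edist a (g s) ≤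
            (⨆ u : Set.Icc (0:ℝ≥0) mg, edist (PhiSub a (T n) (φ n) (l n (u:ℝ≥0))) (g (u:ℝ≥0))) := by
          filter_upwards [hev1, hev2] with n h1 h2
          have ha : PhiSub a (T n) (φ n) (l n s) = a := by
            simp only [PhiSub]
            exact if_neg (parity_not_mem (hT n).1 h1.le h2)
          have hb := hbound1 n
          rwa [ha] at hb
        have h0 : edist a (g s) ≤ 0 := ge_of_tendsto he1 hle
        have : edist a (g s) = 0 := le_antisymm h0 (zero_le)
        exact (edist_eq_zero.1 this).symm
      rw [hga]
      symm
      simp only [PhiSub]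
      exact if_neg (parity_not_mem hS.1 hj1'.le hj2)
    · -- even interval [S (2k+1), S (2k+2)) : value F
      have h22 : 2*k+1+1 = 2*k+2 := by ring
      rw [h22] at hj2
      have hev1 : ∀ᶠ n in atTop, T n (2*k+1) < ((l n s : ℝ≥0):ℝ≥0∞) :=
        (hTconv (2*k+1)).eventually_lt hlsE hj1'
      have hev2 : ∀ᶠ n in atTop, ((l n s:ℝ≥0):ℝ≥0∞) < T n (2*k+2) :=
        hlsE.eventually_lt (hTconv (2*k+2)) hj2
      have hevf : ∀ᶠ n in atTop, PhiSub a (T n) (φ n) (l n s) = φ n (l n s) := by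
        filter_upwards [hev1, hev2] with n h1 h2
        simp only [PhiSub]
        exact if_pos ⟨k, h1.le, h2⟩
      set r : ℕ → ℝ≥0 := fun n => Function.invFun (lam n) (l n s) with hr'
      have hlamr : ∀ n, lam n (r n) = l n s :=
        fun n => Function.invFun_eq ((hlam n).2.surjective (l n s))
      have hr : Tendsto r atTop (nhds s) := by
        rw [tendsto_iff_edist_tendsto_0]
        have hb : ∀ n, edist (r n) s ≤
            (⨆ u : ℝ≥0, edist (lam n u) u) + (⨆ u : ℝ≥0, edist (l n u) u) := by
          intro n
          calc edist (r n) s ≤ edist (r n) (lam n (r n)) + edist (lam n (r n)) s :=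
                edist_triangle _ _ _
          _ = edist (lam n (r n)) (r n) + edist (l n s) s := by rw [edist_comm, hlamr n]
          _ ≤ _ := add_le_add (le_iSup (fun u => edist (lam n u) u) (r n))
                (le_iSup (fun u => edist (l n u) u) s)
        refine tendsto_of_tendsto_of_tendsto_of_le_of_le tendsto_const_nhds
          (by simpa using hlam0.add hl0) (fun n => zero_le) hb
      obtain ⟨mF, hmFM, hsmF⟩ := hMF (s+1)
      have he2 := hMFc mF hmFM
      have he3 : Tendsto (fun n => edist (F (r n)) (F s)) atTop (nhds 0) :=
        tendsto_iff_edist_tendsto_0.1 (hcont.tendsto.comp hr)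
      have hrev : ∀ᶠ n in atTop, r n ≤ mF := by
        have h5 : ∀ᶠ n in atTop, r n < s + 1 :=
          hr.eventually_lt tendsto_const_nhds (lt_add_of_pos_right s one_pos)
        filter_upwards [h5] with n hn
        exact hn.le.trans hsmF
      have hfinal : edist (g s) (F s) ≤ 0 := by
        refine ge_of_tendsto (x := (atTop : Filter ℕ)) (by simpa using (he1.add he2).add he3) ?_
        filter_upwards [hevf, hrev] with n h1 h2
        calc edist (g s) (F s) ≤ edist (g s) (PhiSub a (T n) (φ n) (l n s)) +
              edist (PhiSub a (T n) (φ n) (l n s)) (F (r n)) + edist (F (r n)) (F s) :=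
              edist_triangle4 _ _ _ _
        _ ≤ (⨆ u : Set.Icc (0:ℝ≥0) mg, edist (PhiSub a (T n) (φ n) (l n (u:ℝ≥0))) (g (u:ℝ≥0)))
              + (⨆ u : Set.Icc (0:ℝ≥0) mF, edist (φ n (lam n (u:ℝ≥0))) (F (u:ℝ≥0)))
              + edist (F (r n)) (F s) := by
            refine add_le_add (add_le_add ?_ ?_) le_rfl
            · rw [edist_comm]; exact hbound1 n
            · rw [h1, ← hlamr n]
              exact le_iSup_of_le ⟨r n, zero_le, h2⟩ le_rfl
      have hgF : g s = F s := by
        rw [← edist_eq_zero]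
        exact le_antisymm hfinal (zero_le)
      rw [hgF]
      symm
      simp only [PhiSub]
      exact if_pos ⟨k, hj1'.le, hj2⟩
  exact eq_of_right_cont hg.1 (phiSub_rightCont a hS hFc.1) hEc claim

end Part3

/-- continuity of the truncation map. -/
theorem statement5 {V : Type*} [MetricSpace V] [PolishSpace V] (a : V)
    (Sn : ℕ → ℕ → ℝ≥0∞) (S : ℕ → ℝ≥0∞) (f : ℕ → ℝ≥0 → V) (F : ℝ≥0 → V)
    (hSn : ∀ n, IsSubdivision (Sn n)) (hS : IsSubdivision S)
    (hfc : ∀ n, Cadlag (f n)) (hFc : Cadlag F)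
    (hSconv : ∀ k, Filter.Tendsto (fun n => Sn n k) Filter.atTop (nhds (S k)))
    (hfF : J1Tendsto Filter.atTop f F)
    (hrc : J1RelCompact (fun n => PhiSub a (Sn n) (f n))) :
    J1Tendsto Filter.atTop (fun n => PhiSub a (Sn n) (f n)) (PhiSub a S F) := by
  apply j1_of_dst
  intro m
  by_contra hcon
  rw [ENNReal.tendsto_nhds_zero] at hcon
  push_neg at hcon
  obtain ⟨ε, hε, hfr⟩ := hcon
  have hfr' : ∃ᶠ n in atTop, ε < Dst m (PhiSub a (Sn n) (f n)) (PhiSub a S F) := by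
    refine hfr.mono fun n hn => ?_
    exact hn
  obtain ⟨u, hu, hufreq⟩ := extraction_of_frequently_atTop hfr'
  obtain ⟨w, hw, g, hg, hJ⟩ := hrc u hu
  have hcomp : StrictMono (u ∘ w) := hu.comp hw
  have hgeq : g = PhiSub a S F := by
    refine key_ident a (fun n => Sn (u (w n))) S (fun n => f (u (w n))) F g
      (fun n => hSn _) hS hFc hg (fun k => (hSconv k).comp hcomp.tendsto_atTop)
      (hfF.comp_strictMono hcomp) ?_
    exact hJ
  rw [hgeq] at hJ
  have hdst := hJ.dst_tendsto m
  have hle : ε ≤ 0 :=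
    ge_of_tendsto hdst (Filter.Eventually.of_forall fun n => (hufreq (w n)).le)
  exact absurd hle (by simpa using hε.ne')
end
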